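/- arXiv:0807.2123 — 4 statements merged into one kernel-verified Lean document; each statement's English description precedes it below -/
import Mathlib

section
/- (Pressure distribution principle.) Let f: X → X be a continuous transformation of a compact metric space (X,d), ψ ∈ C(X), and Z ⊆ X an arbitrary Borel set. Suppose there exists a constant s ≥ 0 such that for all sufficiently small ε > 0 one can find a Borel probability measure μ_ε and a constant K(ε) > 0 with μ_ε(Z) > 0 and μ_ε(B_n(x,ε)) ≤ K(ε)·exp(−ns + S_nψ(x)) for all sufficiently large n and every ball B_n(x,ε) having non-empty intersection with Z. Then P_Z(ψ) ≥ s. -/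
open MeasureTheory Filter Topology Set
open scoped ENNReal NNReal

section Preamble

variable {X : Type*}

/-- The Bowen dynamical ball `B_n(x, ε)` for the map `f`. -/
def dynBall [PseudoMetricSpace X] (f : X → X) (n : ℕ) (x : X) (ε : ℝ) : Set X :=
  {y | ∀ i < n, dist (f^[i] x) (f^[i] y) < ε}

/-- The supremum of the Birkhoff sum `S_n ψ` over the dynamical ball `B_n(x, ε)`. -/
noncomputable def supBirkhoff [PseudoMetricSpace X] (f : X → X) (ψ : X → ℝ) (n : ℕ) (x : X)
    (ε : ℝ) : ℝ :=
  sSup (birkhoffSum f ψ n '' dynBall f n x ε)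

/-- The quantity `Q(Z, α, Γ, ψ)` attached to a collection `Γ` of dynamical balls, each ball
being recorded by its centre and its length. -/
noncomputable def ppQ [PseudoMetricSpace X] (f : X → X) (ψ : X → ℝ) (ε α : ℝ)
    (Γ : Set (X × ℕ)) : ℝ≥0∞ :=
  ∑' p : Γ, ENNReal.ofReal
    (Real.exp (-α * ((↑p : X × ℕ).2 : ℝ) + supBirkhoff f ψ (↑p : X × ℕ).2 (↑p : X × ℕ).1 ε))

/-- `M(Z, α, ε, N, ψ)`: infimum of `Q` over all finite or countable covers of `Z` by dynamical
balls of length at least `N`. -/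
noncomputable def ppM [PseudoMetricSpace X] (f : X → X) (ψ : X → ℝ) (ε α : ℝ) (N : ℕ)
    (Z : Set X) : ℝ≥0∞ :=
  ⨅ (Γ : Set (X × ℕ)) (_ : Γ.Countable) (_ : Z ⊆ ⋃ p ∈ Γ, dynBall f p.2 p.1 ε)
    (_ : ∀ p ∈ Γ, N ≤ p.2), ppQ f ψ ε α Γ

/-- `m(Z, α, ε, ψ) = lim_{N → ∞} M(Z, α, ε, N, ψ)`; the limit of this nondecreasing quantity
is its supremum. -/
noncomputable def ppm [PseudoMetricSpace X] (f : X → X) (ψ : X → ℝ) (ε α : ℝ) (Z : Set X) :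
    ℝ≥0∞ :=
  ⨆ N : ℕ, ppM f ψ ε α N Z

/-- The Pesin–Pitskel pressure of `ψ` on `Z` at scale `ε`:
`P_Z(ψ, ε) = inf {α : m(Z, α, ε, ψ) = 0}`. -/
noncomputable def ppPressureAt [PseudoMetricSpace X] (f : X → X) (ψ : X → ℝ) (ε : ℝ)
    (Z : Set X) : EReal :=
  sInf {a : EReal | ∃ α : ℝ, a = (α : EReal) ∧ ppm f ψ ε α Z = 0}

/-- The Pesin–Pitskel topological pressure `P_Z(ψ) = lim_{ε → 0} P_Z(ψ, ε)` (the limit exists,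
hence equals the `limsup` as `ε → 0⁺`). -/
noncomputable def ppPressure [PseudoMetricSpace X] (f : X → X) (ψ : X → ℝ) (Z : Set X) :
    EReal :=
  limsup (fun ε : ℝ => ppPressureAt f ψ ε Z) (𝓝[>] (0 : ℝ))

/-- An `(n, ε)`-separated set for the map `f`. -/
def IsDynSeparated [PseudoMetricSpace X] (f : X → X) (n : ℕ) (ε : ℝ) (S : Set X) : Prop :=
  S.Pairwise fun x y => ∃ i < n, ε < dist (f^[i] x) (f^[i] y)

/-- The largest sum `Σ_{x ∈ S} exp (S_n ψ x)` over `(n, ε)`-separated sets `S`. -/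
noncomputable def sepSum [PseudoMetricSpace X] (f : X → X) (ψ : X → ℝ) (n : ℕ) (ε : ℝ) : ℝ :=
  sSup {r : ℝ | ∃ S : Finset X, IsDynSeparated f n ε ↑S ∧
    r = ∑ x ∈ S, Real.exp (birkhoffSum f ψ n x)}

/-- The classical topological pressure of `ψ` on the whole space, defined via separated sets:
`P(ψ) = lim_{ε → 0} limsup_{n → ∞} (1/n) log P_n(ψ, ε)` (the limit over `ε` exists by
monotonicity, hence equals the `limsup` as `ε → 0⁺`). -/
noncomputable def classicPressure [PseudoMetricSpace X] (f : X → X) (ψ : X → ℝ) : EReal :=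
  limsup (fun ε : ℝ =>
    limsup (fun n : ℕ => ((Real.log (sepSum f ψ n ε) / n : ℝ) : EReal)) atTop) (𝓝[>] (0 : ℝ))

/-- The specification property on an invariant subset `X'`. -/
def SpecificationOn [PseudoMetricSpace X] (f : X → X) (X' : Set X) : Prop :=
  ∀ ε : ℝ, 0 < ε → ∃ m : ℕ, ∀ k : ℕ, ∀ a b : Fin k → ℕ,
    (∀ j, a j ≤ b j) →
    (∀ (j : Fin k) (h : (j : ℕ) + 1 < k), b j + m ≤ a ⟨(j : ℕ) + 1, h⟩) →
    ∀ xs : Fin k → X, (∀ j, xs j ∈ X') →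
      ∃ x : X, ∀ j : Fin k, ∀ p ≤ b j - a j, dist (f^[p + a j] x) (f^[p] (xs j)) < ε

/-- The specification property. -/
def Specification [PseudoMetricSpace X] (f : X → X) : Prop :=
  SpecificationOn f Set.univ

/-- Bowen's specification property: the shadowing point can be taken to be a periodic point of
any prescribed sufficiently large least period. -/
def BowenSpecification [PseudoMetricSpace X] (f : X → X) : Prop :=
  ∀ ε : ℝ, 0 < ε → ∃ m : ℕ, ∀ k : ℕ, ∀ a b : Fin (k + 1) → ℕ,
    (∀ j, a j ≤ b j) →
    (∀ (j : Fin (k + 1)) (h : (j : ℕ) + 1 < k + 1), b j + m ≤ a ⟨(j : ℕ) + 1, h⟩) →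
    ∀ xs : Fin (k + 1) → X, ∀ p : ℕ, b (Fin.last k) - a 0 + m ≤ p →
      ∃ x : X, Function.minimalPeriod f x = p ∧
        ∀ j : Fin (k + 1), ∀ q ≤ b j - a j, dist (f^[q + a j] x) (f^[q] (xs j)) < ε

/-- The irregular set of `φ`: points where the Birkhoff average does not converge. -/
def irregularSet (f : X → X) (φ : X → ℝ) : Set X :=
  {x | ¬ ∃ c : ℝ, Tendsto (fun n : ℕ => birkhoffSum f φ n x / n) atTop (𝓝 c)}

/-- The set of values `∫ φ dμ` over `f`-invariant Borel probability measures `μ`. -/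
def invIntegrals [MeasurableSpace X] (f : X → X) (φ : X → ℝ) : Set ℝ :=
  {r | ∃ μ : Measure X, IsProbabilityMeasure μ ∧ Measure.map f μ = μ ∧ r = ∫ x, φ x ∂μ}

/-- The set of values `∫ φ dμ` over ergodic `f`-invariant Borel probability measures `μ`. -/
def ergIntegrals [MeasurableSpace X] (f : X → X) (φ : X → ℝ) : Set ℝ :=
  {r | ∃ μ : Measure X, IsProbabilityMeasure μ ∧ Ergodic f μ ∧ r = ∫ x, φ x ∂μ}

/-- The set of values `∫ φ dμ` over `f`-invariant Borel probability measures `μ` with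
`μ(X') = 1`. -/
def invIntegralsOn [MeasurableSpace X] (f : X → X) (φ : X → ℝ) (X' : Set X) : Set ℝ :=
  {r | ∃ μ : Measure X, IsProbabilityMeasure μ ∧ Measure.map f μ = μ ∧ μ X' = 1 ∧
    r = ∫ x, φ x ∂μ}

/-- A finite measurable partition of the space. -/
def IsMeasPartition [MeasurableSpace X] (P : Finset (Set X)) : Prop :=
  (∀ A ∈ P, MeasurableSet A) ∧ ⋃₀ (↑P : Set (Set X)) = Set.univ ∧
    (↑P : Set (Set X)).Pairwise Disjoint

/-- The entropy `H_μ(P ∨ f⁻¹P ∨ ⋯ ∨ f⁻⁽ⁿ⁻¹⁾P)` of the `n`-th dynamical refinement of the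
finite partition `P`. -/
noncomputable def refinedEntropy [MeasurableSpace X] (μ : Measure X) (f : X → X)
    (P : Finset (Set X)) (n : ℕ) : ℝ :=
  ∑ c : Fin n → {A // A ∈ P},
    Real.negMulLog ((μ (⋂ i : Fin n, f^[(i : ℕ)] ⁻¹' ((c i : Set X)))).toReal)

/-- The dynamical entropy of a finite partition: `lim (1/n) H_μ(⋁ f⁻ⁱP)`, which by
subadditivity equals the infimum. -/
noncomputable def entropyOfPartition [MeasurableSpace X] (μ : Measure X) (f : X → X)
    (P : Finset (Set X)) : ℝ :=
  ⨅ n : ℕ, refinedEntropy μ f P (n + 1) / ((n : ℝ) + 1)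

/-- The measure-theoretic (Kolmogorov–Sinai) entropy `h_μ(f)`. -/
noncomputable def ksEntropy [MeasurableSpace X] (μ : Measure X) (f : X → X) : EReal :=
  ⨆ (P : Finset (Set X)) (_ : IsMeasPartition P), ((entropyOfPartition μ f P : ℝ) : EReal)

/-- `sup { h_μ + ∫ ψ dμ : μ ∈ M_f(X') }`. -/
noncomputable def supEntropyPlus [PseudoMetricSpace X] [MeasurableSpace X] (f : X → X)
    (ψ : X → ℝ) (X' : Set X) : EReal :=
  ⨆ (μ : Measure X) (_ : IsProbabilityMeasure μ) (_ : Measure.map f μ = μ) (_ : μ X' = 1),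
    (ksEntropy μ f + ((∫ x, ψ x ∂μ : ℝ) : EReal))

end Preamble

/-- **Pressure distribution principle.** If `s ≥ 0` and for all sufficiently small `ε > 0`
there is a Borel probability measure `μ_ε` and a constant `K(ε) > 0` with `μ_ε(Z) > 0` and
`μ_ε(B_n(x, ε)) ≤ K(ε) exp(−ns + S_n ψ(x))` for all sufficiently large `n` and every
dynamical ball meeting `Z`, then `P_Z(ψ) ≥ s`. -/
theorem pressure_distribution_principle {X : Type*} [MetricSpace X] [CompactSpace X]
    [MeasurableSpace X] [BorelSpace X]
    (f : X → X) (hf : Continuous f) (ψ : X → ℝ) (hψ : Continuous ψ)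
    (Z : Set X) (hZ : MeasurableSet Z)
    (s : ℝ) (hs : 0 ≤ s)
    (h : ∃ ε₀ : ℝ, 0 < ε₀ ∧ ∀ ε : ℝ, 0 < ε → ε < ε₀ →
      ∃ (μ : MeasureTheory.Measure X) (K : ℝ), MeasureTheory.IsProbabilityMeasure μ ∧
        0 < K ∧ 0 < μ Z ∧
        ∃ N : ℕ, ∀ n : ℕ, N ≤ n → ∀ x : X, (dynBall f n x ε ∩ Z).Nonempty →
          μ (dynBall f n x ε) ≤
            ENNReal.ofReal (K * Real.exp (-(n : ℝ) * s + birkhoffSum f ψ n x))) :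
    (s : EReal) ≤ ppPressure f ψ Z := by
  obtain ⟨ε₀, hε₀, hmain⟩ := h
  have key : ∀ ε : ℝ, ε ∈ Set.Ioo (0 : ℝ) ε₀ → (s : EReal) ≤ ppPressureAt f ψ ε Z := by
    rintro ε ⟨hε, hεε⟩
    obtain ⟨μ, K, hμprob, hK, hμZ, N, hN⟩ := hmain ε hε hεε
    refine le_sInf ?_
    rintro a ⟨α, rfl, hα⟩
    rw [EReal.coe_le_coe_iff]
    by_contra hlt
    push_neg at hlt
    have hQ : ∀ (Γ : Set (X × ℕ)), Γ.Countable →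
        Z ⊆ ⋃ p ∈ Γ, dynBall f p.2 p.1 ε → (∀ p ∈ Γ, N ≤ p.2) →
        μ Z / ENNReal.ofReal K ≤ ppQ f ψ ε α Γ := by
      intro Γ hΓc hcov hlen
      have hterm : ∀ p : Γ, μ (dynBall f (p : X × ℕ).2 (p : X × ℕ).1 ε ∩ Z) ≤
          ENNReal.ofReal K * ENNReal.ofReal (Real.exp (-α * ((p : X × ℕ).2 : ℝ) +
            supBirkhoff f ψ (p : X × ℕ).2 (p : X × ℕ).1 ε)) := by
        rintro ⟨⟨x, n⟩, hp⟩
        by_cases hne : (dynBall f n x ε ∩ Z).Nonempty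
        · have h1 := hN n (hlen _ hp) x hne
          have hx : x ∈ dynBall f n x ε := fun i _ => by simpa using hε
          have hbdd : BddAbove (birkhoffSum f ψ n '' dynBall f n x ε) := by
            have hc : Continuous (birkhoffSum f ψ n) := by
              unfold birkhoffSum
              exact continuous_finset_sum _ fun i _ => hψ.comp (hf.iterate i)
            exact ((isCompact_univ.image hc).bddAbove).mono
              (Set.image_mono (Set.subset_univ _))
          have hsup : birkhoffSum f ψ n x ≤ supBirkhoff f ψ n x ε :=
            le_csSup hbdd ⟨x, hx, rfl⟩
          have hns : -(n : ℝ) * s + birkhoffSum f ψ n x ≤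
              -α * (n : ℝ) + supBirkhoff f ψ n x ε := by
            nlinarith [Nat.cast_nonneg (α := ℝ) n,
              mul_le_mul_of_nonneg_left hlt.le (Nat.cast_nonneg (α := ℝ) n)]
          calc μ (dynBall f n x ε ∩ Z) ≤ μ (dynBall f n x ε) :=
                measure_mono Set.inter_subset_left
            _ ≤ ENNReal.ofReal (K * Real.exp (-(n : ℝ) * s + birkhoffSum f ψ n x)) := h1
            _ ≤ _ := by
                rw [ENNReal.ofReal_mul hK.le]
                gcongr
        · rw [Set.not_nonempty_iff_eq_empty.1 hne]
          simp
      have hcov' : Z ⊆ ⋃ p ∈ Γ, (dynBall f p.2 p.1 ε ∩ Z) := by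
        intro z hz
        obtain ⟨p, hpΓ, hzp⟩ := Set.mem_iUnion₂.1 (hcov hz)
        exact Set.mem_iUnion₂.2 ⟨p, hpΓ, hzp, hz⟩
      have hchain : μ Z ≤ ENNReal.ofReal K * ppQ f ψ ε α Γ := by
        calc μ Z ≤ μ (⋃ p ∈ Γ, (dynBall f p.2 p.1 ε ∩ Z)) := measure_mono hcov'
          _ ≤ ∑' p : Γ, μ (dynBall f (p : X × ℕ).2 (p : X × ℕ).1 ε ∩ Z) :=
              measure_biUnion_le μ hΓc _
          _ ≤ ∑' p : Γ, ENNReal.ofReal K *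
              ENNReal.ofReal (Real.exp (-α * ((p : X × ℕ).2 : ℝ) +
                supBirkhoff f ψ (p : X × ℕ).2 (p : X × ℕ).1 ε)) :=
              ENNReal.tsum_le_tsum hterm
          _ = ENNReal.ofReal K * ppQ f ψ ε α Γ := ENNReal.tsum_mul_left
      exact ENNReal.div_le_of_le_mul' hchain
    have hMle : μ Z / ENNReal.ofReal K ≤ ppM f ψ ε α N Z :=
      le_iInf fun Γ => le_iInf fun hc => le_iInf fun hcov => le_iInf fun hlen =>
        hQ Γ hc hcov hlen
    have hpos : 0 < μ Z / ENNReal.ofReal K := ENNReal.div_pos hμZ.ne' ENNReal.ofReal_ne_top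
    have hne : ppm f ψ ε α Z ≠ 0 :=
      (hpos.trans_le (hMle.trans (le_iSup (fun N => ppM f ψ ε α N Z) N))).ne'
    exact hne hα
  have hev : ∀ᶠ ε in 𝓝[>] (0 : ℝ), (s : EReal) ≤ ppPressureAt f ψ ε Z :=
    Filter.eventually_of_mem (Ioo_mem_nhdsGT_of_mem ⟨le_refl 0, hε₀⟩) key
  exact le_limsup_of_frequently_le hev.frequently ⟨⊤, Filter.Eventually.of_forall fun _ => le_top⟩
end

section
/- (Generalised pressure distribution principle.) Let f: X → X be a continuous transformation of a compact metric space (X,d), ψ ∈ C(X), and Z ⊆ X an arbitrary Borel set. Suppose there exist ε > 0 and s ≥ 0 such that one can find a sequence of Borel probability measures μ_k, a constant K > 0, and a weak-* limit measure ν of the sequence μ_k with ν(Z) > 0, satisfying limsup_{k→∞} μ_k(B_n(x,ε)) ≤ K·exp(−ns + S_nψ(x)) for all sufficiently large n and every ball B_n(x,ε) having non-empty intersection with Z. Then P_Z(ψ,ε) ≥ s. -/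
open MeasureTheory Filter Topology Set
open scoped ENNReal NNReal

section Helpers
variable {X : Type*}

lemma isOpen_dynBall' [PseudoMetricSpace X] {f : X → X} (hf : Continuous f) (n : ℕ) (x : X)
    (ε : ℝ) : IsOpen (dynBall f n x ε) := by
  have : dynBall f n x ε = ⋂ i ∈ Finset.range n, f^[i] ⁻¹' Metric.ball (f^[i] x) ε := by
    ext y; simp [dynBall, Metric.mem_ball, dist_comm]
  rw [this]
  exact isOpen_biInter_finset fun i _ => (Metric.isOpen_ball).preimage (hf.iterate i)

lemma self_mem_dynBall' [PseudoMetricSpace X] (f : X → X) (n : ℕ) (x : X) {ε : ℝ} (hε : 0 < ε) :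
    x ∈ dynBall f n x ε := fun i _ => by simpa using hε

lemma birkhoff_le_supBirkhoff [MetricSpace X] [CompactSpace X] {f : X → X} (hf : Continuous f)
    {ψ : X → ℝ} (hψ : Continuous ψ) (n : ℕ) (x : X) {ε : ℝ} (hε : 0 < ε) :
    birkhoffSum f ψ n x ≤ supBirkhoff f ψ n x ε := by
  have hc : Continuous (birkhoffSum f ψ n) := by
    apply continuous_finset_sum
    intro i _
    exact hψ.comp (hf.iterate i)
  have hbdd : BddAbove (birkhoffSum f ψ n '' dynBall f n x ε) :=
    ((isCompact_range hc).bddAbove).mono (image_subset_range _ _)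
  exact le_csSup hbdd ⟨x, self_mem_dynBall' f n x hε, rfl⟩

end Helpers

/-- **Generalised pressure distribution principle.** Let `ε > 0` and `s ≥ 0`. Suppose there is
a sequence of Borel probability measures `μ_k`, a constant `K > 0`, and a weak-* limit measure
`ν` of (a subsequence of) the sequence `μ_k` with `ν(Z) > 0`, such that
`limsup_k μ_k(B_n(x, ε)) ≤ K exp(−ns + S_n ψ(x))` for all sufficiently large `n` and every
dynamical ball meeting `Z`. Then `P_Z(ψ, ε) ≥ s`. -/
theorem generalised_pressure_distribution_principle {X : Type*} [MetricSpace X]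
    [CompactSpace X] [MeasurableSpace X] [BorelSpace X]
    (f : X → X) (hf : Continuous f) (ψ : X → ℝ) (hψ : Continuous ψ)
    (Z : Set X) (hZ : MeasurableSet Z)
    (ε s : ℝ) (hε : 0 < ε) (hs : 0 ≤ s)
    (μs : ℕ → MeasureTheory.Measure X) (hμs : ∀ k, MeasureTheory.IsProbabilityMeasure (μs k))
    (K : ℝ) (hK : 0 < K)
    (ν : MeasureTheory.Measure X) (hν : MeasureTheory.IsProbabilityMeasure ν)
    (σ : ℕ → ℕ) (hσ : StrictMono σ)
    (hlim : ∀ h : X → ℝ, Continuous h →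
      Filter.Tendsto (fun k => ∫ x, h x ∂(μs (σ k))) Filter.atTop (nhds (∫ x, h x ∂ν)))
    (hνZ : 0 < ν Z)
    (hball : ∃ N : ℕ, ∀ n : ℕ, N ≤ n → ∀ x : X, (dynBall f n x ε ∩ Z).Nonempty →
      Filter.limsup (fun k => μs k (dynBall f n x ε)) Filter.atTop ≤
        ENNReal.ofReal (K * Real.exp (-(n : ℝ) * s + birkhoffSum f ψ n x))) :
    (s : EReal) ≤ ppPressureAt f ψ ε Z := by
  apply le_sInf
  rintro a ⟨α, rfl, hα⟩
  rw [EReal.coe_le_coe_iff]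
  by_contra hcon
  push_neg at hcon
  -- weak-* convergence of probability measures
  set P : ℕ → ProbabilityMeasure X := fun k => ⟨μs (σ k), hμs _⟩ with hP
  set Pν : ProbabilityMeasure X := ⟨ν, hν⟩ with hPν
  have htend : Tendsto P atTop (𝓝 Pν) := by
    rw [ProbabilityMeasure.tendsto_iff_forall_integral_tendsto]
    intro g
    exact hlim g g.continuous
  -- portmanteau for open sets
  have hopen : ∀ G : Set X, IsOpen G → ν G ≤ limsup (fun k => μs k G) atTop := by
    intro G hG
    have h1 : ν G ≤ liminf (fun k => μs (σ k) G) atTop :=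
      ProbabilityMeasure.le_liminf_measure_open_of_tendsto htend hG
    have h2 : liminf (fun k => μs (σ k) G) atTop ≤ limsup (fun k => μs (σ k) G) atTop :=
      liminf_le_limsup
    have h3 : limsup (fun k => μs (σ k) G) atTop ≤ limsup (fun k => μs k G) atTop := by
      have : (fun k => μs (σ k) G) = (fun k => μs k G) ∘ σ := rfl
      rw [this, limsup_comp]
      exact limsup_le_limsup_of_le hσ.tendsto_atTop
    exact h1.trans (h2.trans h3)
  obtain ⟨N₀, hN₀⟩ := hball
  set C : ℝ≥0∞ := ENNReal.ofReal (K * Real.exp ((α - s) * N₀)) with hC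
  have hC0 : C ≠ 0 := by
    simp only [hC, ne_eq, ENNReal.ofReal_eq_zero, not_le]
    positivity
  have hCt : C ≠ ∞ := ENNReal.ofReal_ne_top
  -- key estimate on each admissible cover
  have key : ∀ Γ : Set (X × ℕ), Γ.Countable → (Z ⊆ ⋃ p ∈ Γ, dynBall f p.2 p.1 ε) →
      (∀ p ∈ Γ, N₀ ≤ p.2) → ν Z ≤ C * ppQ f ψ ε α Γ := by
    intro Γ hcnt hcov hlen
    set Γ' : Set (X × ℕ) := {p ∈ Γ | (dynBall f p.2 p.1 ε ∩ Z).Nonempty} with hΓ'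
    have hsub : Γ' ⊆ Γ := fun p hp => hp.1
    have hcov' : Z ⊆ ⋃ p ∈ Γ', dynBall f p.2 p.1 ε := by
      intro z hz
      have := hcov hz
      rw [mem_iUnion₂] at this ⊢
      obtain ⟨p, hpΓ, hzp⟩ := this
      exact ⟨p, ⟨hpΓ, ⟨z, hzp, hz⟩⟩, hzp⟩
    -- pointwise bound on each ball of Γ'
    have hterm : ∀ p ∈ Γ', ν (dynBall f p.2 p.1 ε) ≤
        C * ENNReal.ofReal (Real.exp (-α * (p.2 : ℝ) + supBirkhoff f ψ p.2 p.1 ε)) := by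
      rintro ⟨x, n⟩ ⟨hpΓ, hne⟩
      have h1 : ν (dynBall f n x ε) ≤ limsup (fun k => μs k (dynBall f n x ε)) atTop :=
        hopen _ (isOpen_dynBall' hf n x ε)
      have h2 := hN₀ n (hlen _ hpΓ) x hne
      refine h1.trans (h2.trans ?_)
      rw [hC, ← ENNReal.ofReal_mul (by positivity)]
      apply ENNReal.ofReal_le_ofReal
      have hS : birkhoffSum f ψ n x ≤ supBirkhoff f ψ n x ε :=
        birkhoff_le_supBirkhoff hf hψ n x hε
      have hE : (-(n:ℝ) * s + birkhoffSum f ψ n x)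
          = ((α - s) * n) + (-α * n + birkhoffSum f ψ n x) := by ring
      rw [hE, Real.exp_add]
      have hn : (N₀ : ℝ) ≤ n := Nat.cast_le.mpr (hlen _ hpΓ)
      calc K * (Real.exp ((α-s)*n) * Real.exp (-α*n + birkhoffSum f ψ n x))
          ≤ K * (Real.exp ((α-s)*N₀) * Real.exp (-α*n + supBirkhoff f ψ n x ε)) := by
            have e1 : Real.exp ((α-s)*n) ≤ Real.exp ((α-s)*N₀) :=
              Real.exp_le_exp.mpr (mul_le_mul_of_nonpos_left hn (by linarith))
            have e2 : Real.exp (-α*n + birkhoffSum f ψ n x)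
                ≤ Real.exp (-α*n + supBirkhoff f ψ n x ε) :=
              Real.exp_le_exp.mpr (by linarith)
            exact mul_le_mul_of_nonneg_left
              (mul_le_mul e1 e2 (Real.exp_pos _).le (Real.exp_pos _).le) hK.le
        _ = K * Real.exp ((α-s)*N₀) * Real.exp (-α*n + supBirkhoff f ψ n x ε) := by ring
    set g : X × ℕ → ℝ≥0∞ :=
      fun p => ENNReal.ofReal (Real.exp (-α * (p.2 : ℝ) + supBirkhoff f ψ p.2 p.1 ε)) with hg
    have hsum : ∑' p : Γ', g ↑p ≤ ∑' p : Γ, g ↑p := by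
      rw [tsum_subtype, tsum_subtype]
      exact ENNReal.tsum_le_tsum fun p =>
        Set.indicator_le_indicator_of_subset hsub (fun _ => zero_le) p
    calc ν Z ≤ ν (⋃ p ∈ Γ', dynBall f p.2 p.1 ε) := measure_mono hcov'
      _ ≤ ∑' p : Γ', ν (dynBall f (↑p : X × ℕ).2 (↑p : X × ℕ).1 ε) :=
          measure_biUnion_le ν (hcnt.mono hsub) _
      _ ≤ ∑' p : Γ', C * g ↑p := ENNReal.tsum_le_tsum (fun p => hterm ↑p p.2)
      _ = C * ∑' p : Γ', g ↑p := ENNReal.tsum_mul_left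
      _ ≤ C * ∑' p : Γ, g ↑p := mul_le_mul_right hsum C
      _ = C * ppQ f ψ ε α Γ := rfl
  -- conclude
  have hM0 : ppM f ψ ε α N₀ Z = 0 :=
    le_antisymm (hα ▸ le_iSup (fun N => ppM f ψ ε α N Z) N₀) zero_le
  have hpos : 0 < ν Z / C := ENNReal.div_pos hνZ.ne' hCt
  have hlt : ppM f ψ ε α N₀ Z < ν Z / C := by rw [hM0]; exact hpos
  simp only [ppM, iInf_lt_iff] at hlt
  obtain ⟨Γ, hcnt, hcov, hlen, hQ⟩ := hlt
  have h1 : ν Z ≤ C * ppQ f ψ ε α Γ := key Γ hcnt hcov hlen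
  have h2 : C * ppQ f ψ ε α Γ < C * (ν Z / C) := (ENNReal.mul_lt_mul_iff_right hC0 hCt).mpr hQ
  have h3 : C * (ν Z / C) ≤ ν Z := ENNReal.mul_div_le
  exact absurd (h1.trans_lt (h2.trans_le h3)) (lt_irrefl _)
end

section
/- Let (X,d) be a compact metric space, f: X → X a continuous map, and φ ∈ C(X). The following are equivalent: (i) (1/n) S_nφ converges uniformly on X to some constant c; (ii) φ ∈ ⋃_{c∈ℝ} cl(Cob(X,f,c)), i.e. φ lies in the sup-norm closure of the functions cohomologous to some constant; (iii) ∫φ dμ takes the same value for all μ ∈ M_f(X), i.e. inf_{μ ∈ M_f(X)} ∫φ dμ = sup_{μ ∈ M_f(X)} ∫φ dμ. -/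
open MeasureTheory Filter Topology Set
open scoped ENNReal NNReal

set_option linter.unusedSectionVars false

section Birk

variable {X : Type*} [MetricSpace X] [CompactSpace X]

lemma my_birkhoff_add (f : X → X) (a b : X → ℝ) (n : ℕ) (x : X) :
    birkhoffSum f (fun y => a y + b y) n x = birkhoffSum f a n x + birkhoffSum f b n x := by
  simp [birkhoffSum, Finset.sum_add_distrib]

lemma my_birkhoff_const (f : X → X) (c : ℝ) (n : ℕ) (x : X) :
    birkhoffSum f (fun _ => c) n x = n * c := by
  simp [birkhoffSum, mul_comm]

lemma my_birkhoff_cobound (f : X → X) (h : X → ℝ) (n : ℕ) (x : X) :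
    birkhoffSum f (fun y => h y - h (f y)) n x = h x - h (f^[n] x) := by
  have : ∀ i, h (f (f^[i] x)) = h (f^[i + 1] x) := by
    intro i; rw [Function.iterate_succ_apply']
  calc birkhoffSum f (fun y => h y - h (f y)) n x
      = ∑ i ∈ Finset.range n, (h (f^[i] x) - h (f^[i + 1] x)) := by
        unfold birkhoffSum; exact Finset.sum_congr rfl fun i _ => by simp only []; rw [this i]
    _ = h (f^[0] x) - h (f^[n] x) := Finset.sum_range_sub' (fun i => h (f^[i] x)) n
    _ = h x - h (f^[n] x) := by simp

lemma my_birkhoff_abs_le (f : X → X) (ψ : C(X, ℝ)) (n : ℕ) (x : X) :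
    |birkhoffSum f (⇑ψ) n x| ≤ n * ‖ψ‖ := by
  calc |birkhoffSum f (⇑ψ) n x| ≤ ∑ i ∈ Finset.range n, |ψ (f^[i] x)| :=
        Finset.abs_sum_le_sum_abs _ _
    _ ≤ ∑ _i ∈ Finset.range n, ‖ψ‖ := Finset.sum_le_sum fun i _ => ψ.norm_coe_le_norm _
    _ = n * ‖ψ‖ := by simp [mul_comm]

lemma my_birkhoff_smul (f : X → X) (r : ℝ) (a : X → ℝ) (n : ℕ) (x : X) :
    birkhoffSum f (fun y => r * a y) n x = r * birkhoffSum f a n x := by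
  simp [birkhoffSum, Finset.mul_sum]

lemma my_birkhoff_comp (f : X → X) (g : X → ℝ) (n : ℕ) (x : X) :
    birkhoffSum f (fun y => g (f y)) n x = birkhoffSum f g n (f x) := by
  unfold birkhoffSum
  exact Finset.sum_congr rfl fun i _ => by
    rw [← Function.iterate_succ_apply, Function.iterate_succ_apply']

end Birk

set_option maxHeartbeats 1000000



section RMK

variable {X : Type*} [MetricSpace X] [CompactSpace X] [MeasurableSpace X] [BorelSpace X]

variable (L : C(X, ℝ) → ℝ)

/-- Test functions for the Riesz content of a set `K`. -/
def rmkTest (K : Set X) : Set C(X, ℝ) :=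
  {g | (∀ x, 0 ≤ g x) ∧ ∀ x ∈ K, 1 ≤ g x}

lemma rmkTest_one (K : Set X) : (1 : C(X, ℝ)) ∈ rmkTest K :=
  ⟨fun _ => zero_le_one, fun _ _ => le_refl 1⟩

/-- The Riesz content (real-valued). -/
noncomputable def rmkC (K : Set X) : ℝ := sInf (L '' rmkTest K)

section hyp

variable (hadd : ∀ g h : C(X, ℝ), L (g + h) = L g + L h)
variable (hsmul : ∀ (c : ℝ) (g : C(X, ℝ)), L (c • g) = c * L g)
variable (hpos : ∀ g : C(X, ℝ), (∀ x, 0 ≤ g x) → 0 ≤ L g)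
variable (hone : L 1 = 1)

include hadd hsmul hpos

lemma rmkL_mono : ∀ g h : C(X, ℝ), (∀ x, g x ≤ h x) → L g ≤ L h := by
  intro g h hle
  have h1 : L (h - g) + L g = L h := by rw [← hadd]; ring_nf
  have h2 : 0 ≤ L (h - g) := hpos _ fun x => by
    simpa [sub_nonneg] using hle x
  linarith

lemma rmkL_nonneg_mem {K : Set X} {g : C(X, ℝ)} (hg : g ∈ rmkTest K) : 0 ≤ L g :=
  hpos g hg.1

lemma rmk_bddBelow (K : Set X) : BddBelow (L '' rmkTest K) :=
  ⟨0, by rintro r ⟨g, hg, rfl⟩; exact hpos g hg.1⟩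

lemma rmk_nonempty (K : Set X) : (L '' rmkTest K).Nonempty :=
  ⟨L 1, ⟨1, rmkTest_one K, rfl⟩⟩

lemma rmkC_nonneg (K : Set X) : 0 ≤ rmkC L K :=
  le_csInf (rmk_nonempty L hadd hsmul hpos K) (by rintro r ⟨g, hg, rfl⟩; exact hpos g hg.1)

lemma rmkC_le {K : Set X} {g : C(X, ℝ)} (hg : g ∈ rmkTest K) : rmkC L K ≤ L g :=
  csInf_le (rmk_bddBelow L hadd hsmul hpos K) ⟨g, hg, rfl⟩

lemma le_rmkC {K : Set X} {c : ℝ} (h : ∀ g ∈ rmkTest K, c ≤ L g) : c ≤ rmkC L K :=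
  le_csInf (rmk_nonempty L hadd hsmul hpos K) (by rintro r ⟨g, hg, rfl⟩; exact h g hg)

lemma rmkC_mono {K₁ K₂ : Set X} (h : K₁ ⊆ K₂) : rmkC L K₁ ≤ rmkC L K₂ :=
  le_rmkC L hadd hsmul hpos fun g hg =>
    rmkC_le L hadd hsmul hpos ⟨hg.1, fun x hx => hg.2 x (h hx)⟩

lemma rmkL_le_rmkC {K : Set X} {g : C(X, ℝ)} (hg0 : ∀ x, 0 ≤ g x) (hg1 : ∀ x, g x ≤ 1)
    (hgK : ∀ x, x ∉ K → g x = 0) : L g ≤ rmkC L K := by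
  refine le_rmkC L hadd hsmul hpos fun t ht => ?_
  refine rmkL_mono L hadd hsmul hpos g t fun x => ?_
  by_cases hx : x ∈ K
  · exact le_trans (hg1 x) (ht.2 x hx)
  · rw [hgK x hx]; exact ht.1 x

include hone

lemma rmkC_univ : rmkC L (univ : Set X) = 1 := by
  refine le_antisymm ?_ ?_
  · have := rmkC_le L hadd hsmul hpos (rmkTest_one (univ : Set X))
    rwa [hone] at this
  · refine le_rmkC L hadd hsmul hpos fun g hg => ?_
    have := rmkL_mono L hadd hsmul hpos 1 g fun x => hg.2 x (mem_univ x)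
    rwa [hone] at this

omit hone

lemma rmkC_union_le (K₁ K₂ : Set X) :
    rmkC L (K₁ ∪ K₂) ≤ rmkC L K₁ + rmkC L K₂ := by
  refine le_of_forall_pos_le_add fun ε hε => ?_
  obtain ⟨r₁, ⟨g₁, hg₁, rfl⟩, hr₁⟩ :=
    exists_lt_of_csInf_lt (rmk_nonempty L hadd hsmul hpos K₁)
      (lt_add_of_pos_right (rmkC L K₁) (half_pos hε))
  obtain ⟨r₂, ⟨g₂, hg₂, rfl⟩, hr₂⟩ :=
    exists_lt_of_csInf_lt (rmk_nonempty L hadd hsmul hpos K₂)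
      (lt_add_of_pos_right (rmkC L K₂) (half_pos hε))
  have hmem : g₁ + g₂ ∈ rmkTest (K₁ ∪ K₂) := by
    constructor
    · intro x; simpa using add_nonneg (hg₁.1 x) (hg₂.1 x)
    · intro x hx
      rcases hx with hx | hx
      · have := hg₁.2 x hx
        have := hg₂.1 x
        simp only [ContinuousMap.add_apply]; linarith
      · have := hg₂.2 x hx
        have := hg₁.1 x
        simp only [ContinuousMap.add_apply]; linarith
  have := rmkC_le L hadd hsmul hpos hmem
  rw [hadd] at this
  linarith

lemma rmkC_union_disjoint {K₁ K₂ : Set X} (h₁ : IsClosed K₁) (h₂ : IsClosed K₂)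
    (hd : Disjoint K₁ K₂) :
    rmkC L (K₁ ∪ K₂) = rmkC L K₁ + rmkC L K₂ := by
  refine le_antisymm (rmkC_union_le L hadd hsmul hpos K₁ K₂) ?_
  obtain ⟨u, hu₁, hu₂, hu01⟩ := exists_continuous_zero_one_of_isClosed h₁ h₂ hd
  refine le_rmkC L hadd hsmul hpos fun g hg => ?_
  have key : (1 - u) * g + u * g = g := by ring
  have hA : rmkC L K₁ ≤ L ((1 - u) * g) := by
    refine rmkC_le L hadd hsmul hpos ⟨?_, ?_⟩
    · intro x
      have := (hu01 x).1; have := (hu01 x).2; have := hg.1 x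
      simp only [ContinuousMap.mul_apply, ContinuousMap.sub_apply, ContinuousMap.one_apply]
      nlinarith
    · intro x hx
      have hux : u x = 0 := hu₁ hx
      have := hg.2 x (Or.inl hx)
      simp only [ContinuousMap.mul_apply, ContinuousMap.sub_apply, ContinuousMap.one_apply, hux]
      linarith
  have hB : rmkC L K₂ ≤ L (u * g) := by
    refine rmkC_le L hadd hsmul hpos ⟨?_, ?_⟩
    · intro x
      have := (hu01 x).1; have := hg.1 x
      simp only [ContinuousMap.mul_apply]
      nlinarith
    · intro x hx
      have hux : u x = 1 := hu₂ hx
      have := hg.2 x (Or.inr hx)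
      simp only [ContinuousMap.mul_apply, hux]
      linarith
  have : L ((1 - u) * g) + L (u * g) = L g := by rw [← hadd, key]
  linarith

end hyp

end RMK

section RMK2
variable {X : Type*} [MetricSpace X] [CompactSpace X] [MeasurableSpace X] [BorelSpace X]
variable (L : C(X, ℝ) → ℝ)
variable (hadd : ∀ g h : C(X, ℝ), L (g + h) = L g + L h)
variable (hsmul : ∀ (c : ℝ) (g : C(X, ℝ)), L (c • g) = c * L g)
variable (hpos : ∀ g : C(X, ℝ), (∀ x, 0 ≤ g x) → 0 ≤ L g)
variable (hone : L 1 = 1)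

/-- The Riesz content associated to a positive normalized linear functional. -/
noncomputable def rmkContent (hadd : ∀ g h : C(X, ℝ), L (g + h) = L g + L h)
    (hsmul : ∀ (c : ℝ) (g : C(X, ℝ)), L (c • g) = c * L g)
    (hpos : ∀ g : C(X, ℝ), (∀ x, 0 ≤ g x) → 0 ≤ L g) : Content X where
  toFun K := Real.toNNReal (rmkC L K)
  mono' K₁ K₂ h := Real.toNNReal_mono (rmkC_mono L hadd hsmul hpos h)
  sup_disjoint' K₁ K₂ hd h₁ h₂ := by
    have h := rmkC_union_disjoint L hadd hsmul hpos h₁ h₂ hd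
    have e : ((K₁ ⊔ K₂ : TopologicalSpace.Compacts X) : Set X) = (K₁ : Set X) ∪ K₂ :=
      TopologicalSpace.Compacts.coe_sup K₁ K₂
    rw [e, h, Real.toNNReal_add (rmkC_nonneg L hadd hsmul hpos _) (rmkC_nonneg L hadd hsmul hpos _)]
  sup_le' K₁ K₂ := by
    have h := rmkC_union_le L hadd hsmul hpos (K₁ : Set X) K₂
    have e : ((K₁ ⊔ K₂ : TopologicalSpace.Compacts X) : Set X) = (K₁ : Set X) ∪ K₂ :=
      TopologicalSpace.Compacts.coe_sup K₁ K₂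
    rw [e]
    calc Real.toNNReal (rmkC L ((K₁ : Set X) ∪ K₂)) ≤
        Real.toNNReal (rmkC L (K₁ : Set X) + rmkC L (K₂ : Set X)) := Real.toNNReal_mono h
      _ = _ := Real.toNNReal_add (rmkC_nonneg L hadd hsmul hpos _) (rmkC_nonneg L hadd hsmul hpos _)

include hadd hsmul hpos hone in
lemma rmkMeasure_prob : IsProbabilityMeasure (rmkContent L hadd hsmul hpos).measure := by
  constructor
  rw [Content.measure_apply _ MeasurableSet.univ,
    (rmkContent L hadd hsmul hpos).outerMeasure_of_isOpen univ isOpen_univ,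
    (rmkContent L hadd hsmul hpos).innerContent_of_isCompact isCompact_univ isOpen_univ]
  have : (rmkContent L hadd hsmul hpos).toFun ⟨univ, isCompact_univ⟩ = 1 := by
    show Real.toNNReal (rmkC L univ) = 1
    rw [rmkC_univ L hadd hsmul hpos hone]
    simp
  show (((rmkContent L hadd hsmul hpos).toFun ⟨univ, isCompact_univ⟩ : ℝ≥0) : ℝ≥0∞) = 1
  rw [this]
  simp

include hadd hsmul hpos in
lemma rmk_content_le_open {K U : Set X} (hK : IsCompact K) (hU : IsOpen U) (hKU : K ⊆ U) :
    (ENNReal.ofReal (rmkC L K)) ≤ (rmkContent L hadd hsmul hpos).measure U := by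
  rw [Content.measure_apply _ hU.measurableSet,
    (rmkContent L hadd hsmul hpos).outerMeasure_of_isOpen U hU]
  have := (rmkContent L hadd hsmul hpos).le_innerContent ⟨K, hK⟩ ⟨U, hU⟩ hKU
  refine le_trans (le_of_eq ?_) this
  show ENNReal.ofReal (rmkC L K) = ((Real.toNNReal (rmkC L K) : ℝ≥0) : ℝ≥0∞)
  rfl

include hadd hsmul in
lemma rmkL_sum {ι : Type*} (s : Finset ι) (gs : ι → C(X, ℝ)) :
    L (∑ i ∈ s, gs i) = ∑ i ∈ s, L (gs i) := by
  classical
  induction s using Finset.cons_induction with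
  | empty =>
    have h0 : L 0 = 0 := by have := hsmul 0 0; simpa using this
    simpa using h0
  | cons a s ha ih => rw [Finset.sum_cons, hadd, ih, Finset.sum_cons]

end RMK2
section RMK3
variable {X : Type*} [MetricSpace X] [CompactSpace X] [MeasurableSpace X] [BorelSpace X]
variable (L : C(X, ℝ) → ℝ)
variable (hadd : ∀ g h : C(X, ℝ), L (g + h) = L g + L h)
variable (hsmul : ∀ (c : ℝ) (g : C(X, ℝ)), L (c • g) = c * L g)
variable (hpos : ∀ g : C(X, ℝ), (∀ x, 0 ≤ g x) → 0 ≤ L g)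
variable (hone : L 1 = 1)

include hadd hsmul hpos hone in
lemma rmkL_le_integral (g : C(X, ℝ)) (hg0 : ∀ x, 0 ≤ g x) :
    L g ≤ ∫ x, g x ∂(rmkContent L hadd hsmul hpos).measure := by
  classical
  set μ := (rmkContent L hadd hsmul hpos).measure with hμdef
  haveI hprob : IsProbabilityMeasure μ := rmkMeasure_prob L hadd hsmul hpos hone
  have hgint : Integrable (⇑g) μ :=
    g.continuous.integrable_of_hasCompactSupport (HasCompactSupport.of_compactSpace _)
  refine le_of_forall_pos_le_add fun ε hε => ?_
  set M : ℝ := ‖g‖ + 1 with hMdef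
  have hM : 0 < M := by positivity
  have hgM : ∀ x, g x < M := fun x =>
    lt_of_le_of_lt (le_trans (le_abs_self _) (g.norm_coe_le_norm x)) (lt_add_one _)
  -- choose n
  obtain ⟨n, hn⟩ := exists_nat_gt (2 * M / ε)
  have hn0 : 0 < (n : ℝ) := lt_trans (by positivity) hn
  have hnnat : 0 < n := by exact_mod_cast hn0
  set δ : ℝ := M / n with hδdef
  have hδ : 0 < δ := by positivity
  have hδε : δ < ε / 2 := by
    rw [hδdef, div_lt_iff₀ hn0]
    have : 2 * M / ε < n := hn
    rw [div_lt_iff₀ hε] at this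
    calc M = 2 * M / 2 := by ring
      _ < n * ε / 2 := by linarith
      _ = ε / 2 * n := by ring
  have hnδ : (n : ℝ) * δ = M := by rw [hδdef]; field_simp
  set ε' : ℝ := ε / (2 * n * M) with hε'def
  have hε' : 0 < ε' := by positivity
  -- the partition by level sets
  set E : Fin n → Set X := fun i => ⇑g ⁻¹' (Ico ((i : ℝ) * δ) (((i : ℝ) + 1) * δ)) with hEdef
  have hEmeas : ∀ i, MeasurableSet (E i) := fun i =>
    g.continuous.measurable measurableSet_Ico
  have hcover : ∀ x : X, ∃ i : Fin n, x ∈ E i := by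
    intro x
    have hx0 : 0 ≤ g x / δ := div_nonneg (hg0 x) hδ.le
    have hflt : ⌊g x / δ⌋₊ < n := by
      rw [Nat.floor_lt hx0]
      rw [div_lt_iff₀ hδ]
      calc g x < M := hgM x
        _ = (n : ℝ) * δ := hnδ.symm
    refine ⟨⟨⌊g x / δ⌋₊, hflt⟩, ?_, ?_⟩
    · show ((⌊g x / δ⌋₊ : ℝ)) * δ ≤ g x
      rw [← le_div_iff₀ hδ]
      exact Nat.floor_le hx0
    · show g x < ((⌊g x / δ⌋₊ : ℝ) + 1) * δ
      rw [← div_lt_iff₀ hδ]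
      exact Nat.lt_floor_add_one _
  have hdisj : ∀ i j : Fin n, i ≠ j → Disjoint (E i) (E j) := by
    have key : ∀ i j : Fin n, (i : ℕ) < (j : ℕ) → Disjoint (E i) (E j) := by
      intro i j hij
      rw [Set.disjoint_left]
      rintro x hxi hxj
      have h1 : g x < ((i : ℝ) + 1) * δ := hxi.2
      have h2 : (j : ℝ) * δ ≤ g x := hxj.1
      have hij' : (i : ℝ) + 1 ≤ (j : ℝ) := by exact_mod_cast hij
      nlinarith
    intro i j hij
    rcases lt_or_gt_of_ne (fun h : (i : ℕ) = (j : ℕ) => hij (Fin.ext h)) with h | h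
    · exact key i j h
    · exact (key j i h).symm
  -- choose open sets
  have hopen : ∀ i : Fin n, ∃ U : Set X, E i ⊆ U ∧ IsOpen U ∧
      (∀ x ∈ U, g x < ((i : ℝ) + 1) * δ) ∧
      (μ U).toReal ≤ (μ (E i)).toReal + ε' := by
    intro i
    obtain ⟨V, hEV, hVopen, hVμ⟩ := Set.exists_isOpen_lt_add (E i) (measure_ne_top μ _)
      (ε := ENNReal.ofReal ε') (ENNReal.ofReal_pos.mpr hε').ne'
    refine ⟨V ∩ ⇑g ⁻¹' (Iio (((i : ℝ) + 1) * δ)), ?_, ?_, ?_, ?_⟩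
    · intro x hx; exact ⟨hEV hx, hx.2⟩
    · exact hVopen.inter (isOpen_Iio.preimage g.continuous)
    · intro x hx; exact hx.2
    · have h1 : μ (V ∩ ⇑g ⁻¹' (Iio (((i : ℝ) + 1) * δ))) ≤ μ V := measure_mono inter_subset_left
      have h2 : μ V ≤ μ (E i) + ENNReal.ofReal ε' := hVμ.le
      have h3 : μ (E i) + ENNReal.ofReal ε' ≠ ∞ := by
        exact ENNReal.add_ne_top.2 ⟨measure_ne_top μ _, ENNReal.ofReal_ne_top⟩
      calc (μ (V ∩ ⇑g ⁻¹' (Iio (((i : ℝ) + 1) * δ)))).toReal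
          ≤ (μ (E i) + ENNReal.ofReal ε').toReal :=
            ENNReal.toReal_mono h3 (le_trans h1 h2)
        _ = (μ (E i)).toReal + ε' := by
            rw [ENNReal.toReal_add (measure_ne_top μ _) ENNReal.ofReal_ne_top,
              ENNReal.toReal_ofReal hε'.le]
  choose U hEU hUopen hUg hUμ using hopen
  -- partition of unity
  obtain ⟨po, hpo⟩ := PartitionOfUnity.exists_isSubordinate isClosed_univ U hUopen
    (by intro x _; obtain ⟨i, hi⟩ := hcover x; exact mem_iUnion.2 ⟨i, hEU i hi⟩)
  -- g = ∑ po i * g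
  have hg_eq : g = ∑ i : Fin n, po i * g := by
    ext x
    have hsum : ∑ᶠ i, po i x = 1 := po.sum_eq_one (mem_univ x)
    rw [finsum_eq_sum_of_fintype] at hsum
    simp only [ContinuousMap.coe_sum, Finset.sum_apply, ContinuousMap.mul_apply]
    rw [← Finset.sum_mul, hsum, one_mul]
  -- term bounds
  have hterm1 : ∀ i : Fin n, L (po i * g) ≤ (((i : ℝ) + 1) * δ) * L (po i) := by
    intro i
    have hpt : ∀ x, (po i * g) x ≤ ((((i : ℝ) + 1) * δ) • po i) x := by
      intro x
      simp only [ContinuousMap.mul_apply, ContinuousMap.smul_apply, smul_eq_mul]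
      by_cases hx : x ∈ U i
      · have := hUg i x hx
        have hp0 := po.nonneg i x
        nlinarith
      · have : po i x = 0 :=
          image_eq_zero_of_notMem_tsupport (fun hmem => hx (hpo i hmem))
        simp [this]
    calc L (po i * g) ≤ L ((((i : ℝ) + 1) * δ) • po i) := rmkL_mono L hadd hsmul hpos _ _ hpt
      _ = (((i : ℝ) + 1) * δ) * L (po i) := hsmul _ _
  have htermpos : ∀ i : Fin n, 0 ≤ L (po i) := fun i => hpos _ (po.nonneg i)
  have hterm2 : ∀ i : Fin n, L (po i) ≤ (μ (U i)).toReal := by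
    intro i
    have hKc : IsCompact (tsupport (po i)) := (isClosed_tsupport _).isCompact
    have h1 : L (po i) ≤ rmkC L (tsupport (po i)) :=
      rmkL_le_rmkC L hadd hsmul hpos (po.nonneg i) (po.le_one i)
        (fun x hx => image_eq_zero_of_notMem_tsupport hx)
    have h2 : ENNReal.ofReal (rmkC L (tsupport (po i))) ≤ μ (U i) :=
      rmk_content_le_open L hadd hsmul hpos hKc (hUopen i) (hpo i)
    have h3 : rmkC L (tsupport (po i)) ≤ (μ (U i)).toReal := by
      have := ENNReal.toReal_mono (measure_ne_top μ _) h2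
      rwa [ENNReal.toReal_ofReal (rmkC_nonneg L hadd hsmul hpos _)] at this
    linarith
  -- sum of measures equals 1
  have hEsum : ∑ i : Fin n, (μ (E i)).toReal = 1 := by
    have hU : (⋃ i ∈ (Finset.univ : Finset (Fin n)), E i) = univ := by
      refine eq_univ_of_forall fun x => ?_
      obtain ⟨i, hi⟩ := hcover x
      exact mem_biUnion (Finset.mem_univ i) hi
    have := measure_biUnion_finset (μ := μ) (s := (Finset.univ : Finset (Fin n))) (f := E)
      (fun i _ j _ hij => hdisj i j hij) (fun i _ => hEmeas i)
    rw [hU] at this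
    have h2 : ∑ i : Fin n, (μ (E i)).toReal = (∑ i : Fin n, μ (E i)).toReal :=
      (ENNReal.toReal_sum (fun i _ => measure_ne_top μ _)).symm
    rw [h2, ← this]
    simp
  -- lower bound on integral
  have hint : ∑ i : Fin n, ((i : ℝ) * δ) * (μ (E i)).toReal ≤ ∫ x, g x ∂μ := by
    have hU : (⋃ i ∈ (Finset.univ : Finset (Fin n)), E i) = univ := by
      refine eq_univ_of_forall fun x => ?_
      obtain ⟨i, hi⟩ := hcover x
      exact mem_biUnion (Finset.mem_univ i) hi
    have hsplit : ∫ x, g x ∂μ = ∑ i : Fin n, ∫ x in E i, g x ∂μ := by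
      rw [← setIntegral_univ (μ := μ) (f := ⇑g), ← hU]
      exact integral_biUnion_finset Finset.univ (fun i _ => hEmeas i)
        (fun i _ j _ hij => hdisj i j hij) (fun i _ => hgint.integrableOn)
    rw [hsplit]
    refine Finset.sum_le_sum fun i _ => ?_
    exact setIntegral_ge_of_const_le_real (hEmeas i) (measure_ne_top μ _)
      (fun x hx => hx.1) hgint.integrableOn
  -- put it together
  have hchain : L g ≤ ∑ i : Fin n, (((i : ℝ) + 1) * δ) * ((μ (E i)).toReal + ε') := by
    calc L g = ∑ i : Fin n, L (po i * g) := by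
          conv_lhs => rw [hg_eq]
          exact rmkL_sum L hadd hsmul Finset.univ _
      _ ≤ ∑ i : Fin n, (((i : ℝ) + 1) * δ) * L (po i) := Finset.sum_le_sum fun i _ => hterm1 i
      _ ≤ ∑ i : Fin n, (((i : ℝ) + 1) * δ) * (μ (U i)).toReal := by
          refine Finset.sum_le_sum fun i _ => ?_
          refine mul_le_mul_of_nonneg_left (hterm2 i) ?_
          positivity
      _ ≤ ∑ i : Fin n, (((i : ℝ) + 1) * δ) * ((μ (E i)).toReal + ε') := by
          refine Finset.sum_le_sum fun i _ => ?_
          refine mul_le_mul_of_nonneg_left (hUμ i) ?_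
          positivity
  have hexpand : ∑ i : Fin n, (((i : ℝ) + 1) * δ) * ((μ (E i)).toReal + ε')
      = (∑ i : Fin n, ((i : ℝ) * δ) * (μ (E i)).toReal)
        + δ * (∑ i : Fin n, (μ (E i)).toReal)
        + (∑ i : Fin n, (((i : ℝ) + 1) * δ) * ε') := by
    rw [Finset.mul_sum, ← Finset.sum_add_distrib, ← Finset.sum_add_distrib]
    refine Finset.sum_congr rfl fun i _ => by ring
  have hP3 : (∑ i : Fin n, (((i : ℝ) + 1) * δ) * ε') ≤ ε / 2 := by
    have hbound : ∀ i : Fin n, (((i : ℝ) + 1) * δ) * ε' ≤ M * ε' := by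
      intro i
      have h1 : (i : ℝ) + 1 ≤ (n : ℝ) := by
        have := i.2
        exact_mod_cast Nat.succ_le_of_lt this
      have h2 : ((i : ℝ) + 1) * δ ≤ (n : ℝ) * δ :=
        mul_le_mul_of_nonneg_right h1 hδ.le
      rw [hnδ] at h2
      exact mul_le_mul_of_nonneg_right h2 hε'.le
    calc (∑ i : Fin n, (((i : ℝ) + 1) * δ) * ε') ≤ ∑ _i : Fin n, M * ε' :=
          Finset.sum_le_sum fun i _ => hbound i
      _ = (n : ℝ) * (M * ε') := by simp [mul_comm]
      _ = ε / 2 := by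
          rw [hε'def]
          field_simp
  calc L g ≤ (∑ i : Fin n, ((i : ℝ) * δ) * (μ (E i)).toReal)
        + δ * (∑ i : Fin n, (μ (E i)).toReal)
        + (∑ i : Fin n, (((i : ℝ) + 1) * δ) * ε') := by rw [← hexpand]; exact hchain
    _ ≤ (∫ x, g x ∂μ) + δ * 1 + ε / 2 := by
        refine add_le_add (add_le_add hint ?_) hP3
        rw [hEsum]
    _ ≤ (∫ x, g x ∂μ) + ε := by
        have : δ * 1 = δ := mul_one δ
        rw [this]
        linarith

end RMK3


section RMK4
variable {X : Type*} [MetricSpace X] [CompactSpace X] [MeasurableSpace X] [BorelSpace X]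

/-- Riesz-Markov-Kakutani representation for a positive normalized linear functional on a
compact metric space. -/
theorem rmk_exists_measure (L : C(X, ℝ) → ℝ)
    (hadd : ∀ g h : C(X, ℝ), L (g + h) = L g + L h)
    (hsmul : ∀ (c : ℝ) (g : C(X, ℝ)), L (c • g) = c * L g)
    (hpos : ∀ g : C(X, ℝ), (∀ x, 0 ≤ g x) → 0 ≤ L g)
    (hone : L 1 = 1) :
    ∃ μ : Measure X, IsProbabilityMeasure μ ∧ ∀ g : C(X, ℝ), ∫ x, g x ∂μ = L g := by
  set μ := (rmkContent L hadd hsmul hpos).measure with hμdef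
  haveI hprob : IsProbabilityMeasure μ := rmkMeasure_prob L hadd hsmul hpos hone
  refine ⟨μ, hprob, fun g => ?_⟩
  have hint : ∀ ψ : C(X, ℝ), Integrable (⇑ψ) μ := fun ψ =>
    ψ.continuous.integrable_of_hasCompactSupport (HasCompactSupport.of_compactSpace _)
  set c : ℝ := ‖g‖ with hcdef
  have habs : ∀ x, |g x| ≤ c := fun x => g.norm_coe_le_norm x
  have hconst : ∀ r : ℝ, L (ContinuousMap.const X r) = r := by
    intro r
    have h : (ContinuousMap.const X r) = r • (1 : C(X, ℝ)) := by
      ext x; simp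
    rw [h, hsmul, hone, mul_one]
  have hintconst : ∀ r : ℝ, ∫ _x, r ∂μ = r := by
    intro r
    rw [integral_const]
    simp
  have h1 : L g ≤ ∫ x, g x ∂μ := by
    have key := rmkL_le_integral L hadd hsmul hpos hone (g + ContinuousMap.const X c)
      (fun x => by
        have := (abs_le.1 (habs x)).1
        simp only [ContinuousMap.add_apply, ContinuousMap.const_apply]
        linarith)
    rw [hadd, hconst] at key
    have hi : ∫ x, (g + ContinuousMap.const X c) x ∂μ = (∫ x, g x ∂μ) + c := by
      simp only [ContinuousMap.add_apply, ContinuousMap.const_apply]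
      rw [integral_add (hint g) (integrable_const c), hintconst]
    rw [hi] at key
    linarith
  have h2 : ∫ x, g x ∂μ ≤ L g := by
    have key := rmkL_le_integral L hadd hsmul hpos hone (ContinuousMap.const X c - g)
      (fun x => by
        have := (abs_le.1 (habs x)).2
        simp only [ContinuousMap.sub_apply, ContinuousMap.const_apply]
        linarith)
    have hLsub : L (ContinuousMap.const X c - g) = c - L g := by
      have h := hadd (ContinuousMap.const X c - g) g
      simp only [sub_add_cancel] at h
      rw [hconst] at h
      linarith
    rw [hLsub] at key
    have hi : ∫ x, (ContinuousMap.const X c - g) x ∂μ = c - ∫ x, g x ∂μ := by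
      simp only [ContinuousMap.sub_apply, ContinuousMap.const_apply]
      rw [integral_sub (integrable_const c) (hint g), hintconst]
    rw [hi] at key
    linarith
  linarith

end RMK4

section Ultra

lemma exists_ultrafilter_tendsto (u : Ultrafilter ℕ) (a : ℕ → ℝ) (C : ℝ) (h : ∀ n, |a n| ≤ C) :
    ∃ c : ℝ, Tendsto a (↑u) (𝓝 c) := by
  have hmem : Set.Icc (-C) C ∈ Ultrafilter.map a u := by
    refine mem_map.2 (univ_mem' fun n => ?_)
    exact mem_Icc.2 (abs_le.1 (h n))
  obtain ⟨c, _, hc⟩ := (isCompact_Icc (a := -C) (b := C)).ultrafilter_le_nhds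
    (Ultrafilter.map a u) (le_principal_iff.2 hmem)
  refine ⟨c, ?_⟩
  have : ↑(Ultrafilter.map a u) = Filter.map a ↑u := rfl
  rwa [this] at hc

end Ultra

section Main

variable {X : Type*} [MetricSpace X] [CompactSpace X] [MeasurableSpace X] [BorelSpace X]

theorem my_iii_to_i (f : X → X) (hf : Continuous f) (φ : C(X, ℝ))
    (h3 : sInf (invIntegrals f ⇑φ) = sSup (invIntegrals f ⇑φ)) :
    ∃ c : ℝ, TendstoUniformly (fun n : ℕ => fun x : X => birkhoffSum f (⇑φ) n x / n)
      (fun _ => c) Filter.atTop := by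
  by_contra hno
  push_neg at hno
  set c₀ := sInf (invIntegrals f ⇑φ) with hc₀
  have hnc := hno c₀
  rw [Metric.tendstoUniformly_iff] at hnc
  push_neg at hnc
  obtain ⟨ε, hε, hfreq⟩ := hnc
  obtain ⟨e, hemono, he⟩ := Filter.extraction_of_frequently_atTop hfreq
  set m : ℕ → ℕ := fun k => e (k + 1) with hmdef
  have hm1 : ∀ k, 1 ≤ m k := fun k => le_trans (Nat.succ_le_succ (Nat.zero_le k))
    (hemono.le_apply)
  have hmpos : ∀ k, (0 : ℝ) < (m k : ℝ) := fun k => by exact_mod_cast hm1 k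
  have hmtop : Tendsto (fun k => (m k : ℝ)) atTop atTop := by
    apply tendsto_natCast_atTop_atTop.comp
    exact (hemono.comp (strictMono_id.add_const 1)).tendsto_atTop
  have hwit : ∀ k, ∃ x : X, ε ≤ dist c₀ (birkhoffSum f (⇑φ) (m k) x / (m k)) := fun k => he (k + 1)
  choose y hy using hwit
  -- the Birkhoff average functionals
  set A : ℕ → C(X, ℝ) → ℝ := fun k g => birkhoffSum f (⇑g) (m k) (y k) / (m k) with hAdef
  have hAbound : ∀ (g : C(X, ℝ)) k, |A k g| ≤ ‖g‖ := by
    intro g k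
    rw [hAdef]
    simp only []
    rw [abs_div, abs_of_pos (hmpos k), div_le_iff₀ (hmpos k)]
    calc |birkhoffSum f (⇑g) (m k) (y k)| ≤ (m k : ℝ) * ‖g‖ := my_birkhoff_abs_le f g _ _
      _ = ‖g‖ * (m k : ℝ) := mul_comm _ _
  obtain ⟨u, hu⟩ := Ultrafilter.exists_le (atTop : Filter ℕ)
  have hLex : ∀ g : C(X, ℝ), ∃ c : ℝ, Tendsto (fun k => A k g) (↑u) (𝓝 c) := fun g =>
    exists_ultrafilter_tendsto u (fun k => A k g) ‖g‖ (fun k => hAbound g k)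
  choose L hL using hLex
  -- properties of L
  have hadd : ∀ g h : C(X, ℝ), L (g + h) = L g + L h := by
    intro g h
    refine tendsto_nhds_unique (hL (g + h)) ?_
    have := (hL g).add (hL h)
    refine Tendsto.congr (fun k => ?_) this
    rw [hAdef]
    simp only [ContinuousMap.coe_add]
    rw [show ⇑g + ⇑h = fun x => g x + h x from rfl, my_birkhoff_add, add_div]
  have hsmul : ∀ (c : ℝ) (g : C(X, ℝ)), L (c • g) = c * L g := by
    intro c g
    refine tendsto_nhds_unique (hL (c • g)) ?_
    have := (hL g).const_mul c
    refine Tendsto.congr (fun k => ?_) this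
    rw [hAdef]
    simp only [ContinuousMap.coe_smul]
    rw [show (c • ⇑g) = fun x => c * g x from rfl, my_birkhoff_smul, mul_div_assoc]
  have hpos : ∀ g : C(X, ℝ), (∀ x, 0 ≤ g x) → 0 ≤ L g := by
    intro g hg
    refine ge_of_tendsto (hL g) (Eventually.of_forall fun k => ?_)
    refine div_nonneg ?_ (hmpos k).le
    exact Finset.sum_nonneg fun i _ => hg _
  have hone : L 1 = 1 := by
    refine tendsto_nhds_unique (hL 1) ?_
    refine Tendsto.congr (fun k => ?_) tendsto_const_nhds
    rw [hAdef]
    simp only [ContinuousMap.coe_one]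
    rw [show ((1 : X → ℝ)) = fun _ => (1 : ℝ) from rfl, my_birkhoff_const, mul_one,
      div_self (hmpos k).ne']
  have hinv : ∀ g : C(X, ℝ), L (g.comp ⟨f, hf⟩) = L g := by
    intro g
    have hdiff : Tendsto (fun k => A k (g.comp ⟨f, hf⟩) - A k g) atTop (𝓝 0) := by
      have hbd : ∀ k, |A k (g.comp ⟨f, hf⟩) - A k g| ≤ 2 * ‖g‖ / (m k : ℝ) := by
        intro k
        have hcomp : birkhoffSum f (⇑(g.comp ⟨f, hf⟩)) (m k) (y k)
            = birkhoffSum f (⇑g) (m k) (f (y k)) := by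
          rw [show ⇑(g.comp ⟨f, hf⟩) = fun z => g (f z) from rfl]
          exact my_birkhoff_comp f (⇑g) (m k) (y k)
        have hsub := birkhoffSum_apply_sub_birkhoffSum f (⇑g) (m k) (y k)
        rw [hAdef]
        simp only []
        rw [hcomp, div_sub_div_same, hsub]
        rw [abs_div, abs_of_pos (hmpos k), div_le_div_iff_of_pos_right (hmpos k)]
        calc |g (f^[m k] (y k)) - g (y k)| ≤ |g (f^[m k] (y k))| + |g (y k)| := abs_sub _ _
          _ ≤ ‖g‖ + ‖g‖ := add_le_add (g.norm_coe_le_norm _) (g.norm_coe_le_norm _)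
          _ = 2 * ‖g‖ := by ring
      have hz : Tendsto (fun k => 2 * ‖g‖ / (m k : ℝ)) atTop (𝓝 0) :=
        Tendsto.div_atTop tendsto_const_nhds hmtop
      exact squeeze_zero_norm hbd hz
    have h1 : Tendsto (fun k => A k (g.comp ⟨f, hf⟩) - A k g) (↑u) (𝓝 (L (g.comp ⟨f, hf⟩) - L g)) :=
      (hL _).sub (hL g)
    have h2 : Tendsto (fun k => A k (g.comp ⟨f, hf⟩) - A k g) (↑u) (𝓝 0) :=
      hdiff.mono_left hu
    have := tendsto_nhds_unique h1 h2
    linarith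
  have hεL : ε ≤ dist c₀ (L φ) := by
    have hd : Tendsto (fun k => dist c₀ (A k φ)) (↑u) (𝓝 (dist c₀ (L φ))) :=
      tendsto_const_nhds.dist (hL φ)
    exact ge_of_tendsto hd (Eventually.of_forall fun k => hy k)
  -- the invariant measure
  obtain ⟨μ, hμprob, hμrep⟩ := rmk_exists_measure L hadd hsmul hpos hone
  haveI := hμprob
  have hmap : Measure.map f μ = μ := by
    haveI : IsProbabilityMeasure (Measure.map f μ) :=
      Measure.isProbabilityMeasure_map hf.measurable.aemeasurable
    apply ext_of_forall_lintegral_eq_of_IsFiniteMeasure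
    intro f₀
    have hcont : Continuous fun x => (f₀ x : ℝ) := NNReal.continuous_coe.comp f₀.continuous
    set g : C(X, ℝ) := ⟨fun x => (f₀ x : ℝ), hcont⟩ with hgdef
    have hint1 : Integrable (fun x => (f₀ x : ℝ)) (Measure.map f μ) :=
      hcont.integrable_of_hasCompactSupport (HasCompactSupport.of_compactSpace _)
    have hint2 : Integrable (fun x => (f₀ x : ℝ)) μ :=
      hcont.integrable_of_hasCompactSupport (HasCompactSupport.of_compactSpace _)
    rw [lintegral_coe_eq_integral _ hint1, lintegral_coe_eq_integral _ hint2]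
    congr 1
    calc ∫ x, (f₀ x : ℝ) ∂(Measure.map f μ) = ∫ x, g (f x) ∂μ :=
          integral_map hf.measurable.aemeasurable hcont.aestronglyMeasurable
      _ = ∫ x, (g.comp ⟨f, hf⟩) x ∂μ := rfl
      _ = L (g.comp ⟨f, hf⟩) := hμrep _
      _ = L g := hinv g
      _ = ∫ x, (f₀ x : ℝ) ∂μ := (hμrep g).symm
  -- contradiction
  have hrmem : L φ ∈ invIntegrals f ⇑φ := ⟨μ, hμprob, hmap, (hμrep φ).symm⟩
  have hbdd : ∀ s ∈ invIntegrals f ⇑φ, |s| ≤ ‖φ‖ := by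
    rintro s ⟨ν, hν, hνmap, rfl⟩
    haveI := hν
    have := norm_integral_le_of_norm_le_const (μ := ν) (f := ⇑φ) (C := ‖φ‖)
      (Eventually.of_forall fun x => φ.norm_coe_le_norm x)
    simpa using this
  have hbb : BddBelow (invIntegrals f ⇑φ) := ⟨-‖φ‖, fun s hs => (abs_le.1 (hbdd s hs)).1⟩
  have hba : BddAbove (invIntegrals f ⇑φ) := ⟨‖φ‖, fun s hs => (abs_le.1 (hbdd s hs)).2⟩
  have h1 : c₀ ≤ L φ := csInf_le hbb hrmem
  have h2 : L φ ≤ c₀ := (le_csSup hba hrmem).trans_eq h3.symm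
  have : L φ = c₀ := le_antisymm h2 h1
  rw [this, dist_self] at hεL
  linarith

end Main

section Easy

variable {X : Type*} [MetricSpace X] [CompactSpace X]

lemma coboundary_birkhoff (f : X → X) (hf : Continuous f) (c : ℝ) (h : C(X, ℝ)) (n : ℕ) (x : X) :
    birkhoffSum f (⇑(ContinuousMap.const X c + h - h.comp ⟨f, hf⟩)) n x
      = n * c + (h x - h (f^[n] x)) := by
  have hfun : ⇑(ContinuousMap.const X c + h - h.comp ⟨f, hf⟩)
      = fun y => c + (h y - h (f y)) := by
    ext y
    simp only [ContinuousMap.sub_apply, ContinuousMap.add_apply, ContinuousMap.const_apply,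
      ContinuousMap.comp_apply, ContinuousMap.coe_mk]
    ring
  rw [hfun, my_birkhoff_add f (fun _ => c) (fun y => h y - h (f y)) n x,
    my_birkhoff_const, my_birkhoff_cobound]

theorem my_ii_to_i (f : X → X) (hf : Continuous f) (φ : C(X, ℝ))
    (h2 : ∃ c : ℝ, φ ∈ closure {g : C(X, ℝ) | ∃ h : C(X, ℝ),
      g = ContinuousMap.const X c + h - h.comp ⟨f, hf⟩}) :
    ∃ c : ℝ, TendstoUniformly (fun n : ℕ => fun x : X => birkhoffSum f (⇑φ) n x / n)
      (fun _ => c) Filter.atTop := by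
  obtain ⟨c, hc⟩ := h2
  refine ⟨c, ?_⟩
  rw [Metric.tendstoUniformly_iff]
  intro ε hε
  obtain ⟨g, hgmem, hgd⟩ := Metric.mem_closure_iff.1 hc (ε / 3) (by positivity)
  obtain ⟨h, rfl⟩ := hgmem
  have hz : Tendsto (fun n : ℕ => 2 * ‖h‖ / (n : ℝ)) atTop (𝓝 0) :=
    Tendsto.div_atTop tendsto_const_nhds tendsto_natCast_atTop_atTop
  have hev : ∀ᶠ n : ℕ in atTop, 2 * ‖h‖ / (n : ℝ) < ε / 3 :=
    hz.eventually (gt_mem_nhds (by positivity))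
  filter_upwards [hev, eventually_ge_atTop 1] with n hn hn1 x
  have hnpos : (0 : ℝ) < (n : ℝ) := by exact_mod_cast hn1
  set G := ContinuousMap.const X c + h - h.comp ⟨f, hf⟩ with hGdef
  have hb1 : |c - birkhoffSum f (⇑G) n x / n| < ε / 3 := by
    rw [hGdef, coboundary_birkhoff f hf c h n x]
    have he : c - ((n : ℝ) * c + (h x - h (f^[n] x))) / n = -((h x - h (f^[n] x)) / n) := by
      field_simp
      ring
    rw [he, abs_neg, abs_div, abs_of_pos hnpos, div_lt_iff₀ hnpos]
    calc |h x - h (f^[n] x)| ≤ |h x| + |h (f^[n] x)| := abs_sub _ _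
      _ ≤ ‖h‖ + ‖h‖ := add_le_add (h.norm_coe_le_norm _) (h.norm_coe_le_norm _)
      _ = 2 * ‖h‖ := by ring
      _ < ε / 3 * n := by rw [div_lt_iff₀ hnpos] at hn; exact hn
  have hb2 : |birkhoffSum f (⇑G) n x / n - birkhoffSum f (⇑φ) n x / n| < ε / 3 := by
    rw [div_sub_div_same]
    have hsub : birkhoffSum f (⇑G) n x - birkhoffSum f (⇑φ) n x
        = birkhoffSum f (⇑(G - φ)) n x := by
      rw [show ⇑(G - φ) = fun y => G y + (-1 : ℝ) * φ y by ext y; simp; ring,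
        my_birkhoff_add f (⇑G) (fun y => (-1 : ℝ) * φ y) n x, my_birkhoff_smul]
      ring
    rw [hsub, abs_div, abs_of_pos hnpos, div_lt_iff₀ hnpos]
    calc |birkhoffSum f (⇑(G - φ)) n x| ≤ (n : ℝ) * ‖G - φ‖ := my_birkhoff_abs_le f _ n x
      _ < (n : ℝ) * (ε / 3) := by
          refine mul_lt_mul_of_pos_left ?_ hnpos
          rw [← dist_eq_norm, dist_comm]
          exact hgd
      _ = ε / 3 * n := by ring
  calc dist c (birkhoffSum f (⇑φ) n x / n)
      = |c - birkhoffSum f (⇑φ) n x / n| := Real.dist_eq _ _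
    _ = |(c - birkhoffSum f (⇑G) n x / n)
          + (birkhoffSum f (⇑G) n x / n - birkhoffSum f (⇑φ) n x / n)| := by ring_nf
    _ ≤ |c - birkhoffSum f (⇑G) n x / n|
          + |birkhoffSum f (⇑G) n x / n - birkhoffSum f (⇑φ) n x / n| := abs_add_le _ _
    _ < ε / 3 + ε / 3 := add_lt_add hb1 hb2
    _ < ε := by linarith

theorem my_i_to_ii (f : X → X) (hf : Continuous f) (φ : C(X, ℝ))
    (h1 : ∃ c : ℝ, TendstoUniformly (fun n : ℕ => fun x : X => birkhoffSum f (⇑φ) n x / n)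
      (fun _ => c) Filter.atTop) :
    ∃ c : ℝ, φ ∈ closure {g : C(X, ℝ) | ∃ h : C(X, ℝ),
      g = ContinuousMap.const X c + h - h.comp ⟨f, hf⟩} := by
  obtain ⟨c, hc⟩ := h1
  refine ⟨c, ?_⟩
  set ψ : C(X, ℝ) := φ - ContinuousMap.const X c with hψdef
  have hBcont : ∀ k : ℕ, Continuous fun x => birkhoffSum f (⇑ψ) k x := by
    intro k
    unfold birkhoffSum
    exact continuous_finset_sum _ fun i _ => ψ.continuous.comp (hf.iterate i)
  set H : ℕ → C(X, ℝ) := fun n => (n : ℝ)⁻¹ •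
    ∑ k ∈ Finset.range n, (⟨fun x => birkhoffSum f (⇑ψ) k x, hBcont k⟩ : C(X, ℝ)) with hHdef
  set G : ℕ → C(X, ℝ) := fun n => ContinuousMap.const X c + H n - (H n).comp ⟨f, hf⟩ with hGdef
  have hGmem : ∀ n, G n ∈ {g : C(X, ℝ) | ∃ h : C(X, ℝ),
      g = ContinuousMap.const X c + h - h.comp ⟨f, hf⟩} := fun n => ⟨H n, rfl⟩
  have hkey : ∀ n : ℕ, 1 ≤ n → ∀ x : X, (φ - G n) x = birkhoffSum f (⇑ψ) n x / n := by
    intro n hn x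
    have hnpos : (0 : ℝ) < (n : ℝ) := by exact_mod_cast hn
    have hHx : ∀ z : X, H n z = (n : ℝ)⁻¹ * ∑ k ∈ Finset.range n, birkhoffSum f (⇑ψ) k z := by
      intro z
      rw [hHdef]
      simp [ContinuousMap.coe_sum, Finset.sum_apply]
    have hsum' : (∑ k ∈ Finset.range n, birkhoffSum f (⇑ψ) k (f x))
        - ∑ k ∈ Finset.range n, birkhoffSum f (⇑ψ) k x
        = birkhoffSum f (⇑ψ) n x - n * ψ x := by
      rw [← Finset.sum_sub_distrib]
      calc ∑ k ∈ Finset.range n, (birkhoffSum f (⇑ψ) k (f x) - birkhoffSum f (⇑ψ) k x)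
          = ∑ k ∈ Finset.range n, (ψ (f^[k] x) - ψ x) :=
            Finset.sum_congr rfl fun k _ => birkhoffSum_apply_sub_birkhoffSum f (⇑ψ) k x
        _ = birkhoffSum f (⇑ψ) n x - n * ψ x := by
            rw [Finset.sum_sub_distrib]
            congr 1
            simp [mul_comm]
    have hGx : G n x = c + H n x - H n (f x) := rfl
    have hφx : φ x = ψ x + c := by simp [hψdef]
    rw [ContinuousMap.sub_apply, hGx, hφx, hHx, hHx]
    field_simp
    linear_combination hsum'
  have hψbirk : ∀ n : ℕ, ∀ x : X, birkhoffSum f (⇑ψ) n x = birkhoffSum f (⇑φ) n x - n * c := by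
    intro n x
    rw [show ⇑ψ = fun y => φ y + (-1 : ℝ) * (fun _ : X => c) y by
      ext y; simp [hψdef]; ring]
    rw [my_birkhoff_add f (⇑φ) _ n x, my_birkhoff_smul, my_birkhoff_const]
    ring
  have hG : Tendsto G atTop (𝓝 φ) := by
    rw [Metric.tendsto_atTop]
    intro ε hε
    rw [Metric.tendstoUniformly_iff] at hc
    obtain ⟨N, hN⟩ := Filter.eventually_atTop.1 (hc (ε / 2) (by positivity))
    refine ⟨max N 1, fun n hn => ?_⟩
    have hn1 : 1 ≤ n := le_trans (le_max_right _ _) hn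
    have hnN : N ≤ n := le_trans (le_max_left _ _) hn
    have hnpos : (0 : ℝ) < (n : ℝ) := by exact_mod_cast hn1
    have hdist : dist (G n) φ = ‖φ - G n‖ := by
      rw [dist_eq_norm, ← norm_neg]
      congr 1
      abel
    rw [hdist]
    have hbound : ‖φ - G n‖ ≤ ε / 2 := by
      rw [ContinuousMap.norm_le _ (by positivity : (0 : ℝ) ≤ ε / 2)]
      intro x
      rw [Real.norm_eq_abs, hkey n hn1 x, hψbirk n x]
      have hd := hN n hnN x
      rw [Real.dist_eq] at hd
      have he : (birkhoffSum f (⇑φ) n x - n * c) / n = birkhoffSum f (⇑φ) n x / n - c := by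
        field_simp
      rw [he, abs_sub_comm]
      exact hd.le
    linarith
  exact mem_closure_of_tendsto hG (Eventually.of_forall hGmem)

end Easy

section Easy2

variable {X : Type*} [MetricSpace X] [CompactSpace X] [MeasurableSpace X] [BorelSpace X]

theorem my_ii_to_iii (f : X → X) (hf : Continuous f) (φ : C(X, ℝ))
    (h2 : ∃ c : ℝ, φ ∈ closure {g : C(X, ℝ) | ∃ h : C(X, ℝ),
      g = ContinuousMap.const X c + h - h.comp ⟨f, hf⟩}) :
    sInf (invIntegrals f ⇑φ) = sSup (invIntegrals f ⇑φ) := by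
  obtain ⟨c, hc⟩ := h2
  have hsub : ∀ r ∈ invIntegrals f ⇑φ, r = c := by
    rintro r ⟨μ, hμ, hmap, rfl⟩
    haveI := hμ
    have hint : ∀ ψ : C(X, ℝ), Integrable (⇑ψ) μ := fun ψ =>
      ψ.continuous.integrable_of_hasCompactSupport (HasCompactSupport.of_compactSpace _)
    have hball : ∀ ε > 0, |(∫ x, φ x ∂μ) - c| < ε := by
      intro ε hε
      obtain ⟨g, hgmem, hgd⟩ := Metric.mem_closure_iff.1 hc ε hε
      obtain ⟨h, hgeq⟩ := hgmem
      have hcomp : ∫ x, h (f x) ∂μ = ∫ x, h x ∂μ := by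
        have h1 := integral_map (μ := μ) hf.measurable.aemeasurable
          h.continuous.aestronglyMeasurable
        rw [hmap] at h1
        exact h1.symm
      have hgint : ∫ x, g x ∂μ = c := by
        rw [hgeq]
        simp only [ContinuousMap.sub_apply, ContinuousMap.add_apply, ContinuousMap.const_apply,
          ContinuousMap.comp_apply, ContinuousMap.coe_mk]
        have h1 : ∫ x, (c + h x - h (f x)) ∂μ = (∫ x, (c + h x) ∂μ) - ∫ x, h (f x) ∂μ := by
          exact integral_sub (by exact (integrable_const c).add (hint h))
            (by exact hint (h.comp ⟨f, hf⟩))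
        have h2 : ∫ x, (c + h x) ∂μ = c + ∫ x, h x ∂μ := by
          rw [integral_add (integrable_const c) (hint h), integral_const]
          simp
        rw [h1, h2, hcomp]
        ring
      have hiφg : (∫ x, φ x ∂μ) - c = ∫ x, (φ x - g x) ∂μ := by
        rw [integral_sub (hint φ) (hint g), hgint]
      have hb : |∫ x, (φ x - g x) ∂μ| ≤ dist φ g := by
        have hb2 := norm_integral_le_of_norm_le_const (μ := μ) (f := fun x => φ x - g x)
          (C := dist φ g) (Eventually.of_forall fun x => by
            rw [dist_eq_norm]
            exact (φ - g).norm_coe_le_norm x)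
        simpa using hb2
      rw [hiφg]
      exact lt_of_le_of_lt hb hgd
    by_contra hne
    have habs : 0 < |(∫ x, φ x ∂μ) - c| := by
      rcases lt_or_eq_of_le (abs_nonneg ((∫ x, φ x ∂μ) - c)) with hl | hl
      · exact hl
      · exact absurd (by linarith [abs_eq_zero.1 hl.symm] : (∫ x, φ x ∂μ) = c) hne
    exact absurd (hball _ habs) (lt_irrefl _)
  rcases eq_empty_or_nonempty (invIntegrals f ⇑φ) with he | ⟨r₀, hr₀⟩
  · rw [he]
    simp [Real.sInf_empty, Real.sSup_empty]
  · have heq : invIntegrals f ⇑φ = {c} := by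
      apply Subset.antisymm
      · intro r hr; exact hsub r hr
      · intro r hr
        rw [mem_singleton_iff] at hr
        rw [hr, ← hsub r₀ hr₀]
        exact hr₀
    rw [heq, csInf_singleton, csSup_singleton]

end Easy2

/-- For a continuous map `f` of a compact metric space and continuous `φ`, the following are
equivalent: (i) the Birkhoff averages `(1/n) S_n φ` converge uniformly to a constant;
(ii) `φ` lies in the sup-norm closure of the functions cohomologous to some constant;
(iii) all integrals of `φ` against `f`-invariant Borel probability measures coincide. -/
theorem uniform_convergence_iff_cohomologous_iff_unique_integral {X : Type*} [MetricSpace X]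
    [CompactSpace X] [MeasurableSpace X] [BorelSpace X]
    (f : X → X) (hf : Continuous f) (φ : C(X, ℝ)) :
    ((∃ c : ℝ, TendstoUniformly (fun n : ℕ => fun x : X => birkhoffSum f (⇑φ) n x / n)
        (fun _ => c) Filter.atTop) ↔
      (∃ c : ℝ, φ ∈ closure {g : C(X, ℝ) | ∃ h : C(X, ℝ),
        g = ContinuousMap.const X c + h - h.comp ⟨f, hf⟩})) ∧
    ((∃ c : ℝ, φ ∈ closure {g : C(X, ℝ) | ∃ h : C(X, ℝ),
        g = ContinuousMap.const X c + h - h.comp ⟨f, hf⟩}) ↔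
      sInf (invIntegrals f ⇑φ) = sSup (invIntegrals f ⇑φ)) := by
  constructor
  · exact ⟨fun h1 => my_i_to_ii f hf φ h1, fun h2 => my_ii_to_i f hf φ h2⟩
  · exact ⟨fun h2 => my_ii_to_iii f hf φ h2,
      fun h3 => my_i_to_ii f hf φ (my_iii_to_i f hf φ h3)⟩
end

section
/- Let (X,d) be a compact metric space and f: X → X a continuous map with the specification property. If φ ∈ C(X) satisfies inf_{μ ∈ M_f(X)} ∫φ dμ < sup_{μ ∈ M_f(X)} ∫φ dμ, then the irregular set X̂_φ is non-empty. -/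
open MeasureTheory Filter Topology Set
open scoped ENNReal NNReal

section AuxIrreg

variable {X : Type*} [MetricSpace X] [CompactSpace X] [MeasurableSpace X] [BorelSpace X]

private lemma aux_map_iterate {f : X → X} (hf : Continuous f) {μ : Measure X}
    (hμ : Measure.map f μ = μ) : ∀ i : ℕ, Measure.map f^[i] μ = μ := by
  intro i
  induction i with
  | zero => simp
  | succ n ih =>
    rw [Function.iterate_succ',
      ← Measure.map_map hf.measurable (hf.measurable.iterate n), ih, hμ]

private lemma aux_integrable {φ : X → ℝ} (hφ : Continuous φ) (μ : Measure X)
    [IsFiniteMeasure μ] : Integrable φ μ :=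
  hφ.integrable_of_hasCompactSupport (HasCompactSupport.of_compactSpace φ)

private lemma aux_integral_birkhoff {f : X → X} (hf : Continuous f) {φ : X → ℝ}
    (hφ : Continuous φ) {μ : Measure X} [IsProbabilityMeasure μ]
    (hμ : Measure.map f μ = μ) (n : ℕ) :
    ∫ x, birkhoffSum f φ n x ∂μ = (n : ℝ) * ∫ x, φ x ∂μ := by
  have key : ∀ i : ℕ, ∫ x, φ (f^[i] x) ∂μ = ∫ x, φ x ∂μ := by
    intro i
    conv_rhs => rw [← aux_map_iterate hf hμ i]
    rw [integral_map (hf.measurable.iterate i).aemeasurable hφ.aestronglyMeasurable]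
  unfold birkhoffSum
  rw [integral_finset_sum _ (fun i _ =>
    aux_integrable (show Continuous fun x => φ (f^[i] x) from hφ.comp (hf.iterate i)) μ)]
  simp_rw [key]
  simp [mul_comm]

private lemma aux_exists_birkhoff_ge [Nonempty X] {f : X → X} (hf : Continuous f) {φ : X → ℝ}
    (hφ : Continuous φ) {μ : Measure X} [IsProbabilityMeasure μ]
    (hμ : Measure.map f μ = μ) (n : ℕ) :
    ∃ x : X, (n : ℝ) * ∫ x, φ x ∂μ ≤ birkhoffSum f φ n x := by
  have hcont : Continuous fun x : X => birkhoffSum f φ n x := by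
    unfold birkhoffSum
    exact continuous_finset_sum _ fun i _ => hφ.comp (hf.iterate i)
  obtain ⟨x0, -, hx0⟩ := isCompact_univ.exists_isMaxOn univ_nonempty hcont.continuousOn
  refine ⟨x0, ?_⟩
  rw [← aux_integral_birkhoff hf hφ hμ n]
  calc ∫ x, birkhoffSum f φ n x ∂μ
      ≤ ∫ _x, birkhoffSum f φ n x0 ∂μ := by
        refine integral_mono ?_ (integrable_const _) (fun y => hx0 (mem_univ y))
        exact aux_integrable hcont μ
    _ = birkhoffSum f φ n x0 := by simp

private lemma aux_exists_birkhoff_le [Nonempty X] {f : X → X} (hf : Continuous f) {φ : X → ℝ}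
    (hφ : Continuous φ) {μ : Measure X} [IsProbabilityMeasure μ]
    (hμ : Measure.map f μ = μ) (n : ℕ) :
    ∃ x : X, birkhoffSum f φ n x ≤ (n : ℝ) * ∫ x, φ x ∂μ := by
  obtain ⟨x0, hx0⟩ := aux_exists_birkhoff_ge hf (hφ.neg) hμ n
  refine ⟨x0, ?_⟩
  have h1 : birkhoffSum f (fun y => -φ y) n x0 = -birkhoffSum f φ n x0 := by
    simp [birkhoffSum]
  have h2 : ∫ x, -φ x ∂μ = -∫ x, φ x ∂μ := integral_neg φ
  simp only [Pi.neg_apply, h2] at hx0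
  rw [show (fun y => -φ y) = -φ from rfl] at h1
  have : (n : ℝ) * -∫ x, φ x ∂μ ≤ -birkhoffSum f φ n x0 := by
    rw [← h1]; exact hx0
  linarith

/-- start times of the blocks -/
private def seqA (M m : ℕ) : ℕ → ℕ
  | 0 => 0
  | k + 1 => seqA M m k + (M * (seqA M m k + 1) + 1) + m

/-- lengths of the blocks -/
private def seqL (M m k : ℕ) : ℕ := M * (seqA M m k + 1) + 1

private lemma seqA_succ (M m k : ℕ) :
    seqA M m (k + 1) = seqA M m k + seqL M m k + m := rfl

private lemma seqL_pos (M m k : ℕ) : 1 ≤ seqL M m k := Nat.le_add_left 1 _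

private lemma seqA_ge (M m : ℕ) : ∀ k, k ≤ seqA M m k := by
  intro k
  induction k with
  | zero => exact Nat.zero_le _
  | succ n ih => rw [seqA_succ]; have := seqL_pos M m n; omega

end AuxIrreg

set_option linter.unusedSectionVars false

/-- If `f` has the specification property and the integrals of `φ` against invariant
probability measures are not all equal, then the irregular set of `φ` is non-empty. -/
theorem irregular_set_nonempty {X : Type*} [MetricSpace X] [CompactSpace X]
    [MeasurableSpace X] [BorelSpace X]
    (f : X → X) (hf : Continuous f) (hspec : Specification f)
    (φ : X → ℝ) (hφ : Continuous φ)
    (hne : sInf (invIntegrals f φ) < sSup (invIntegrals f φ)) :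
    (irregularSet f φ).Nonempty := by
  -- the set of invariant integrals is nonempty
  have hSne : (invIntegrals f φ).Nonempty := by
    by_contra h
    rw [Set.not_nonempty_iff_eq_empty] at h
    rw [h, Real.sInf_empty, Real.sSup_empty] at hne
    exact lt_irrefl _ hne
  obtain ⟨c1, hc1S, hc1t⟩ := exists_lt_of_csInf_lt hSne
    (show sInf (invIntegrals f φ) < (sInf (invIntegrals f φ) + sSup (invIntegrals f φ)) / 2 by
      linarith)
  obtain ⟨c2, hc2S, hc2t⟩ := exists_lt_of_lt_csSup hSne
    (show (sInf (invIntegrals f φ) + sSup (invIntegrals f φ)) / 2 < sSup (invIntegrals f φ) by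
      linarith)
  have hc12 : c1 < c2 := lt_trans hc1t hc2t
  obtain ⟨μ1, hμ1p, hμ1i, hμ1int⟩ := hc1S
  obtain ⟨μ2, hμ2p, hμ2i, hμ2int⟩ := hc2S
  have hXne : Nonempty X := by
    by_contra h
    rw [not_nonempty_iff] at h
    have h1 : μ1 Set.univ = 1 := measure_univ
    rw [Set.univ_eq_empty_iff.mpr h] at h1
    simp at h1
  -- a uniform bound on φ
  obtain ⟨x0, -, hx0⟩ := isCompact_univ.exists_isMaxOn univ_nonempty hφ.abs.continuousOn
  set C : ℝ := |φ x0| with hCdef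
  have hC : ∀ y, |φ y| ≤ C := fun y => hx0 (mem_univ y)
  have hC0 : 0 ≤ C := le_trans (abs_nonneg _) (hC x0)
  have habs : ∀ (n : ℕ) (y : X), |birkhoffSum f φ n y| ≤ (n : ℝ) * C := by
    intro n y
    calc |∑ k ∈ Finset.range n, φ (f^[k] y)|
        ≤ ∑ k ∈ Finset.range n, |φ (f^[k] y)| := Finset.abs_sum_le_sum_abs _ _
      _ ≤ ∑ _k ∈ Finset.range n, C := Finset.sum_le_sum fun k _ => hC _
      _ = (n : ℝ) * C := by simp [mul_comm]
  -- the gap δ and the modulus ε of uniform continuity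
  set δ : ℝ := (c2 - c1) / 5 with hδdef
  have hδ : 0 < δ := by rw [hδdef]; linarith
  obtain ⟨ε, hε, hUC⟩ := Metric.uniformContinuous_iff.mp
    (CompactSpace.uniformContinuous_of_continuous hφ) δ hδ
  obtain ⟨m, hm⟩ := hspec (ε / 2) (by positivity)
  -- the growth factor M
  set M : ℕ := ⌈(C + |c1| + |c2|) / δ⌉₊ + 1 with hMdef
  have hM : (C + |c1| + |c2|) / δ ≤ (M : ℝ) := by
    refine le_trans (Nat.le_ceil _) ?_
    exact_mod_cast Nat.le_succ _
  have hkey : ∀ k, (seqA M m k : ℝ) * (C + |c1| + |c2|) ≤ (seqL M m k : ℝ) * δ := by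
    intro k
    have hLdef : seqL M m k = M * (seqA M m k + 1) + 1 := rfl
    have h1 : (M : ℝ) * (seqA M m k : ℝ) ≤ (seqL M m k : ℝ) := by
      rw [hLdef]
      push_cast
      nlinarith [(Nat.cast_nonneg M : (0:ℝ) ≤ (M:ℝ))]
    have h2 : ((C + |c1| + |c2|) / δ) * (seqA M m k : ℝ) ≤ (M : ℝ) * (seqA M m k : ℝ) :=
      mul_le_mul_of_nonneg_right hM (Nat.cast_nonneg _)
    calc (seqA M m k : ℝ) * (C + |c1| + |c2|)
        = ((C + |c1| + |c2|) / δ) * (seqA M m k : ℝ) * δ := by field_simp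
      _ ≤ (M : ℝ) * (seqA M m k : ℝ) * δ := mul_le_mul_of_nonneg_right h2 hδ.le
      _ ≤ (seqL M m k : ℝ) * δ := mul_le_mul_of_nonneg_right h1 hδ.le
  -- target points with extreme Birkhoff sums
  have hwex : ∀ k : ℕ, ∃ x : X,
      (Even k → (seqL M m k : ℝ) * c2 ≤ birkhoffSum f φ (seqL M m k) x) ∧
      (¬ Even k → birkhoffSum f φ (seqL M m k) x ≤ (seqL M m k : ℝ) * c1) := by
    intro k
    by_cases hk : Even k
    · obtain ⟨x, hx⟩ := aux_exists_birkhoff_ge hf hφ hμ2i (seqL M m k)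
      exact ⟨x, fun _ => by rw [hμ2int]; exact hx, fun h => absurd hk h⟩
    · obtain ⟨x, hx⟩ := aux_exists_birkhoff_le hf hφ hμ1i (seqL M m k)
      exact ⟨x, fun h => absurd h hk, fun _ => by rw [hμ1int]; exact hx⟩
  choose w hwge hwle using hwex
  -- apply specification to the first K+1 blocks
  have hxex : ∀ K : ℕ, ∃ x : X, ∀ j : Fin (K + 1), ∀ p < seqL M m (j : ℕ),
      dist (f^[p + seqA M m (j : ℕ)] x) (f^[p] (w (j : ℕ))) < ε / 2 := by
    intro K
    have h1 : ∀ j : Fin (K + 1), (fun j : Fin (K + 1) => seqA M m (j : ℕ)) j ≤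
        (fun j : Fin (K + 1) => seqA M m (j : ℕ) + (seqL M m (j : ℕ) - 1)) j :=
      fun j => Nat.le_add_right _ _
    have h2 : ∀ (j : Fin (K + 1)) (h : (j : ℕ) + 1 < K + 1),
        (fun j : Fin (K + 1) => seqA M m (j : ℕ) + (seqL M m (j : ℕ) - 1)) j + m ≤
        (fun j : Fin (K + 1) => seqA M m (j : ℕ)) ⟨(j : ℕ) + 1, h⟩ := by
      intro j h
      simp only
      rw [seqA_succ]
      have := seqL_pos M m (j : ℕ)
      omega
    obtain ⟨x, hx⟩ := hm (K + 1) _ _ h1 h2 (fun j => w (j : ℕ)) (fun j => Set.mem_univ _)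
    refine ⟨x, fun j p hp => ?_⟩
    refine hx j p ?_
    show p ≤ seqA M m (j : ℕ) + (seqL M m (j : ℕ) - 1) - seqA M m (j : ℕ)
    have := seqL_pos M m (j : ℕ)
    omega
  choose xs hxs using hxex
  obtain ⟨x, -, ψ, hψmono, hψtend⟩ := isCompact_univ.tendsto_subseq fun K => Set.mem_univ (xs K)
  refine ⟨x, ?_⟩
  -- x shadows all blocks
  have hshadow : ∀ k, ∀ p < seqL M m k,
      dist (f^[p + seqA M m k] x) (f^[p] (w k)) ≤ ε / 2 := by
    intro k p hp
    have hcont : Filter.Tendsto (fun j => dist (f^[p + seqA M m k] (xs (ψ j))) (f^[p] (w k)))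
        Filter.atTop (nhds (dist (f^[p + seqA M m k] x) (f^[p] (w k)))) :=
      (((hf.iterate (p + seqA M m k)).dist continuous_const).tendsto x).comp hψtend
    refine le_of_tendsto hcont ?_
    filter_upwards [hψmono.tendsto_atTop.eventually_ge_atTop k] with j hj
    exact (hxs (ψ j) ⟨k, by omega⟩ p hp).le
  -- Birkhoff sums over a block are close to those of the target point
  have hseg : ∀ k, |birkhoffSum f φ (seqL M m k) (f^[seqA M m k] x) -
      birkhoffSum f φ (seqL M m k) (w k)| ≤ (seqL M m k : ℝ) * δ := by
    intro k
    have heq : birkhoffSum f φ (seqL M m k) (f^[seqA M m k] x) -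
        birkhoffSum f φ (seqL M m k) (w k) =
        ∑ p ∈ Finset.range (seqL M m k), (φ (f^[p + seqA M m k] x) - φ (f^[p] (w k))) := by
      rw [birkhoffSum, birkhoffSum, ← Finset.sum_sub_distrib]
      refine Finset.sum_congr rfl fun p _ => ?_
      rw [Function.iterate_add_apply]
    rw [heq]
    calc |∑ p ∈ Finset.range (seqL M m k), (φ (f^[p + seqA M m k] x) - φ (f^[p] (w k)))|
        ≤ ∑ p ∈ Finset.range (seqL M m k), |φ (f^[p + seqA M m k] x) - φ (f^[p] (w k))| :=
          Finset.abs_sum_le_sum_abs _ _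
      _ ≤ ∑ _p ∈ Finset.range (seqL M m k), δ := by
          refine Finset.sum_le_sum fun p hp => ?_
          have hd := hshadow k p (Finset.mem_range.mp hp)
          have hlt : dist (f^[p + seqA M m k] x) (f^[p] (w k)) < ε := by linarith
          have := hUC hlt
          rw [Real.dist_eq] at this
          exact this.le
      _ = (seqL M m k : ℝ) * δ := by simp [mul_comm]
  -- lower bound at even times
  have hEven : ∀ k, Even k → ((seqA M m k + seqL M m k : ℕ) : ℝ) * (c2 - 2 * δ) ≤
      birkhoffSum f φ (seqA M m k + seqL M m k) x := by
    intro k hk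
    rw [birkhoffSum_add]
    have h1 := neg_le_of_abs_le (habs (seqA M m k) x)
    have h2 := (abs_le.mp (hseg k)).1
    have h3 := hwge k hk
    have h4 := hkey k
    have ha0 : (0 : ℝ) ≤ (seqA M m k : ℝ) := Nat.cast_nonneg _
    have h5 : (seqA M m k : ℝ) * c2 ≤ (seqA M m k : ℝ) * |c2| :=
      mul_le_mul_of_nonneg_left (le_abs_self _) ha0
    have h6 : (0 : ℝ) ≤ (seqA M m k : ℝ) * δ := mul_nonneg ha0 hδ.le
    have h7 : (0 : ℝ) ≤ (seqA M m k : ℝ) * |c1| := mul_nonneg ha0 (abs_nonneg _)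
    push_cast
    nlinarith [h1, h2, h3, h4, h5, h6, h7]
  -- upper bound at odd times
  have hOdd : ∀ k, ¬ Even k → birkhoffSum f φ (seqA M m k + seqL M m k) x ≤
      ((seqA M m k + seqL M m k : ℕ) : ℝ) * (c1 + 2 * δ) := by
    intro k hk
    rw [birkhoffSum_add]
    have h1 := le_of_abs_le (habs (seqA M m k) x)
    have h2 := (abs_le.mp (hseg k)).2
    have h3 := hwle k hk
    have h4 := hkey k
    have ha0 : (0 : ℝ) ≤ (seqA M m k : ℝ) := Nat.cast_nonneg _
    have h5 : -((seqA M m k : ℝ) * |c1|) ≤ (seqA M m k : ℝ) * c1 := by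
      have := mul_le_mul_of_nonneg_left (neg_abs_le c1) ha0
      simpa [mul_neg] using this
    have h6 : (0 : ℝ) ≤ (seqA M m k : ℝ) * δ := mul_nonneg ha0 hδ.le
    have h7 : (0 : ℝ) ≤ (seqA M m k : ℝ) * |c2| := mul_nonneg ha0 (abs_nonneg _)
    push_cast
    nlinarith [h1, h2, h3, h4, h5, h6, h7]
  -- conclude: the Birkhoff averages cannot converge
  rintro ⟨c, hc⟩
  have hfreq2 : ∃ᶠ n in Filter.atTop, c2 - 2 * δ ≤ birkhoffSum f φ n x / (n : ℝ) := by
    rw [Filter.frequently_atTop]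
    intro N
    refine ⟨seqA M m (2 * N) + seqL M m (2 * N), ?_, ?_⟩
    · have := seqA_ge M m (2 * N); omega
    · have hn1 : 1 ≤ seqA M m (2 * N) + seqL M m (2 * N) :=
        le_trans (seqL_pos M m _) (Nat.le_add_left _ _)
      have hn0 : (0 : ℝ) < ((seqA M m (2 * N) + seqL M m (2 * N) : ℕ) : ℝ) := by
        exact_mod_cast hn1
      rw [le_div_iff₀ hn0]
      have := hEven (2 * N) (even_two_mul N)
      linarith
  have hfreq1 : ∃ᶠ n in Filter.atTop, birkhoffSum f φ n x / (n : ℝ) ≤ c1 + 2 * δ := by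
    rw [Filter.frequently_atTop]
    intro N
    refine ⟨seqA M m (2 * N + 1) + seqL M m (2 * N + 1), ?_, ?_⟩
    · have := seqA_ge M m (2 * N + 1); omega
    · have hn1 : 1 ≤ seqA M m (2 * N + 1) + seqL M m (2 * N + 1) :=
        le_trans (seqL_pos M m _) (Nat.le_add_left _ _)
      have hn0 : (0 : ℝ) < ((seqA M m (2 * N + 1) + seqL M m (2 * N + 1) : ℕ) : ℝ) := by
        exact_mod_cast hn1
      rw [div_le_iff₀ hn0]
      have := hOdd (2 * N + 1) fun h => (Nat.even_add_one.mp h) (even_two_mul N)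
      linarith
  have hle2 : c2 - 2 * δ ≤ c := by
    by_contra h
    push_neg at h
    obtain ⟨n, hn1, hn2⟩ := (hfreq2.and_eventually (hc.eventually_lt_const h)).exists
    linarith
  have hle1 : c ≤ c1 + 2 * δ := by
    by_contra h
    push_neg at h
    obtain ⟨n, hn1, hn2⟩ := (hfreq1.and_eventually (hc.eventually_const_lt h)).exists
    linarith
  rw [hδdef] at hle1 hle2
  linarith
end
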